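/- arXiv:1812.05311 — 14 statements merged into one kernel-verified Lean document; each statement's English description precedes it below -/
import Mathlib

section
/- Let F be a finite field with q elements. Then there exists a ∈ F such that the polynomial λ² + aλ + 1 is irreducible over F and a root ω of this polynomial in the algebraic closure of F has multiplicative order q + 1 in the multiplicative group of the algebraic closure. -/
open Polynomial

noncomputable section

abbrev SL2 (F : Type*) [Field F] := Matrix.SpecialLinearGroup (Fin 2) F

abbrev PSL2 (F : Type*) [Field F] := SL2 F ⧸ Subgroup.center (SL2 F)

/-- image in `PSL₂(F)` of the matrix `[[1, x], [0, 1]]`. -/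
def uu {F : Type*} [Field F] (x : F) : PSL2 F :=
  QuotientGroup.mk ⟨!![1, x; 0, 1], by simp [Matrix.det_fin_two_of]⟩

/-- image in `PSL₂(F)` of the matrix `[[y, 0], [0, y⁻¹]]`. -/
def hh {F : Type*} [Field F] (y : F) (hy : y ≠ 0) : PSL2 F :=
  QuotientGroup.mk ⟨!![y, 0; 0, y⁻¹], by simp [Matrix.det_fin_two_of, mul_inv_cancel₀ hy]⟩

/-- image in `PSL₂(F)` of the matrix `[[0, 1], [-1, 0]]`. -/
def ss {F : Type*} [Field F] : PSL2 F :=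
  QuotientGroup.mk ⟨!![0, 1; -1, 0], by simp [Matrix.det_fin_two_of]⟩

/-- the sequence `a_k`: `a₁ = a`, `a_{k+1} = a - a_k⁻¹` (with junk value `a₀ = 0`). -/
def aSeq {F : Type*} [Field F] (a : F) : ℕ → F
  | 0 => 0
  | k + 1 => a - (aSeq a k)⁻¹

/-- the sequence `b_ℓ`: `b₀ = b`, `b_{ℓ+1} = a - b_ℓ⁻¹`. -/
def bSeq {F : Type*} [Field F] (a b : F) : ℕ → F
  | 0 => b
  | k + 1 => a - (bSeq a b k)⁻¹

/-- `alph a n = α_{n-1}(a)`, the (index-shifted) Dickson polynomial of the second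
kind values: `α_{-1} = 0`, `α₀ = 1`, `α_{n+1} = a·α_n - α_{n-1}`. -/
def alph {F : Type*} [Field F] (a : F) : ℕ → F
  | 0 => 0
  | 1 => 1
  | n + 2 => a * alph a (n + 1) - alph a n

/-- `bet a b n = β_{n-1}(a,b)`: `β_{-1} = 1`, `β_n = b·α_n - α_{n-1}` for `n ≥ 0`. -/
def bet {F : Type*} [Field F] (a b : F) : ℕ → F
  | 0 => 1
  | n + 1 => b * alph a (n + 1) - alph a n

/-- `gam a b n = γ_{n-1}(a,b)` where `γ_n = α_n + b·β_n`. -/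
def gam {F : Type*} [Field F] (a b : F) (n : ℕ) : F := alph a n + b * bet a b n

lemma fixed_mem_range {F K : Type*} [Field F] [Fintype F] [Field K] [Algebra F K]
    (x : K) (h : x ^ (Fintype.card F) = x) : ∃ c : F, algebraMap F K c = x := by
  classical
  set q := Fintype.card F with hq
  have hq2 : 2 ≤ q := Fintype.one_lt_card
  set P : K[X] := X ^ q - X with hP
  have hPne : P ≠ 0 := by
    intro h0
    have : P.coeff q = 1 := by
      simp only [hP, coeff_sub, coeff_X_pow, coeff_X]
      rw [if_pos trivial, if_neg (by omega : ¬ 1 = q)]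
      ring
    rw [h0] at this
    simp at this
  have hdeg : P.natDegree ≤ q := by
    refine le_trans (natDegree_sub_le _ _) ?_
    simp [natDegree_X_pow]; omega
  set T : Finset K := Finset.univ.image (algebraMap F K) with hT
  have hTcard : T.card = q := by
    rw [hT, Finset.card_image_of_injective _ (algebraMap F K).injective, Finset.card_univ]
  have hsub : T ⊆ P.roots.toFinset := by
    intro y hy
    rw [hT, Finset.mem_image] at hy
    obtain ⟨c, -, rfl⟩ := hy
    rw [Multiset.mem_toFinset, mem_roots hPne]
    simp only [IsRoot, hP, eval_sub, eval_pow, eval_X]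
    rw [← map_pow, FiniteField.pow_card, sub_self]
  have hle : P.roots.toFinset.card ≤ q :=
    le_trans (Multiset.toFinset_card_le _) (le_trans (P.card_roots' ) hdeg)
  have heq : T = P.roots.toFinset :=
    Finset.eq_of_subset_of_card_le hsub (by omega)
  have hx : x ∈ P.roots.toFinset := by
    rw [Multiset.mem_toFinset, mem_roots hPne]
    simp [IsRoot, hP, h]
  rw [← heq, hT, Finset.mem_image] at hx
  obtain ⟨c, -, hc⟩ := hx
  exact ⟨c, hc⟩

theorem stmt0 (F : Type*) [Field F] [Fintype F] (q : ℕ) (hq : Fintype.card F = q) :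
    ∃ a : F, Irreducible (X ^ 2 + C a * X + 1 : F[X]) ∧
      ∃ ω : AlgebraicClosure F, aeval ω (X ^ 2 + C a * X + 1 : F[X]) = 0 ∧ orderOf ω = q + 1 := by
  classical
  have hq2 : 2 ≤ q := hq ▸ Fintype.one_lt_card
  set K := AlgebraicClosure F with hK
  obtain ⟨p, hcp⟩ := CharP.exists F
  haveI : CharP F p := hcp
  haveI : Fact p.Prime := ⟨CharP.char_is_prime F p⟩
  obtain ⟨n, hpn, hcard⟩ := FiniteField.card F p
  haveI : CharP K p := charP_of_injective_algebraMap (algebraMap F K).injective p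
  have hqpn : q = p ^ (n : ℕ) := hq ▸ hcard
  have hpq : ¬ p ∣ q + 1 := by
    intro hd
    have h1 : p ∣ q := hqpn ▸ dvd_pow_self p n.ne_zero
    have : p ∣ 1 := by simpa using Nat.dvd_sub hd h1
    exact hpn.one_lt.ne' (Nat.dvd_one.mp this)
  haveI : NeZero ((q + 1 : ℕ) : K) := ⟨by
    rw [Ne, CharP.cast_eq_zero_iff K p]; exact hpq⟩
  have hdcy : (cyclotomic (q + 1) K).degree ≠ 0 := by
    rw [degree_cyclotomic]
    exact_mod_cast (Nat.totient_pos.mpr (by omega)).ne'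
  obtain ⟨ω, hroot⟩ := IsAlgClosed.exists_root _ hdcy
  have hprim : IsPrimitiveRoot ω (q + 1) := isRoot_cyclotomic_iff.mp hroot
  have hord : orderOf ω = q + 1 := hprim.eq_orderOf.symm
  have hω1 : ω ^ (q + 1) = 1 := hprim.pow_eq_one
  have hω0 : ω ≠ 0 := by
    intro h; rw [h, zero_pow (by omega)] at hω1; exact zero_ne_one hω1
  have hωq : ω ^ q = ω⁻¹ := by
    refine eq_inv_of_mul_eq_one_left ?_
    rw [← pow_succ]; exact hω1
  have hfrob : (ω + ω⁻¹) ^ q = ω + ω⁻¹ := by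
    rw [hqpn, add_pow_char_pow, ← hqpn, hωq, inv_pow, hωq, inv_inv, add_comm]
  obtain ⟨c, hc⟩ := fixed_mem_range (F := F) (ω + ω⁻¹) (by rw [hq]; exact hfrob)
  refine ⟨-c, ?_, ω, ?_, hord⟩
  · have hnd : (X ^ 2 + C (-c) * X + 1 : F[X]).natDegree = 2 := by compute_degree!
    rw [irreducible_iff_roots_eq_zero_of_degree_le_three (by omega) (by omega)]
    rw [Multiset.eq_zero_iff_forall_notMem]
    intro r hr
    have hne : (X ^ 2 + C (-c) * X + 1 : F[X]) ≠ 0 := by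
      intro h0; rw [h0, natDegree_zero] at hnd; omega
    have hrF : r ^ 2 + (-c) * r + 1 = 0 := by
      have := (mem_roots hne).mp hr
      simpa [IsRoot] using this
    set s : K := algebraMap F K r with hs
    have hsK : s ^ 2 + (-(ω + ω⁻¹)) * s + 1 = 0 := by
      have := congrArg (algebraMap F K) hrF
      simp only [map_add, map_mul, map_pow, map_one, map_zero, map_neg] at this
      rw [hc] at this
      simpa [hs] using this
    have h1 : ω * ω⁻¹ = 1 := mul_inv_cancel₀ hω0
    have hfac : (s - ω) * (s - ω⁻¹) = 0 := by linear_combination hsK + h1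
    have hs0 : s ≠ 0 := by
      intro h0; rw [h0] at hsK; simp at hsK
    have hr0 : r ≠ 0 := by
      intro h0; apply hs0; rw [hs, h0, map_zero]
    have hpow : s ^ (q - 1) = 1 := by
      rw [hs, ← map_pow, ← hq, FiniteField.pow_card_sub_one_eq_one r hr0, map_one]
    have hdvd : orderOf s ∣ q - 1 := orderOf_dvd_of_pow_eq_one hpow
    have hsord : orderOf s = q + 1 := by
      rcases mul_eq_zero.mp hfac with h' | h'
      · rw [sub_eq_zero.mp h', hord]
      · rw [sub_eq_zero.mp h']
        exact hprim.inv.eq_orderOf.symm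
    rw [hsord] at hdvd
    have := Nat.le_of_dvd (by omega) hdvd
    omega
  · have : aeval ω (X ^ 2 + C (-c) * X + 1 : F[X])
        = ω ^ 2 + (-(ω + ω⁻¹)) * ω + 1 := by
      simp only [map_add, map_mul, map_pow, map_one, aeval_X, aeval_C, map_neg]
      rw [hc]
    rw [this]
    have h1 : ω⁻¹ * ω = 1 := inv_mul_cancel₀ hω0
    linear_combination -h1

end
end

section
/- The order of the element u(a)·s in PSL₂(F), i.e. the order of the image in PSL₂(F) of the matrix [[−a, 1], [−1, 0]] ∈ SL₂(F), equals (q+1)/gcd(2, q+1); that is, the order is q+1 when F has characteristic 2, and (q+1)/2 when F has odd characteristic. -/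
open Polynomial

noncomputable section

/-- powers of the matrix `[[-a,1],[-1,0]]` in terms of `alph`. -/
lemma matpow {F : Type*} [Field F] (a : F) (n : ℕ) :
    (!![-a, 1; -1, 0] : Matrix (Fin 2) (Fin 2) F) ^ (n + 1) =
      (-1 : F) ^ (n + 1) •
        !![alph a (n + 2), -(alph a (n + 1)); alph a (n + 1), -(alph a n)] := by
  induction n with
  | zero =>
      ext i j
      fin_cases i <;> fin_cases j <;> simp [alph]
  | succ m ih =>
      rw [pow_succ, ih]
      ext i j
      fin_cases i <;> fin_cases j <;>
        simp [Matrix.mul_apply, Fin.sum_univ_succ, alph, pow_succ] <;> ring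

/-- `alph` in terms of a root `ω` of `λ² + aλ + 1`. -/
lemma alphomega {F : Type*} [Field F] (a : F) {K : Type*} [Field K] (φ : F →+* K)
    (ω : K) (hω : ω ≠ 0) (hrel : ω * ω + φ a * ω + 1 = 0) (n : ℕ) :
    (ω - ω⁻¹) * φ (alph a n) = (-1 : K) ^ (n + 1) * (ω ^ n - ω⁻¹ ^ n) := by
  have ha : φ a = -ω - ω⁻¹ := by
    field_simp
    linear_combination hrel
  have key : ∀ n : ℕ, (ω - ω⁻¹) * φ (alph a n) = (-1 : K) ^ (n + 1) * (ω ^ n - ω⁻¹ ^ n) ∧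
      (ω - ω⁻¹) * φ (alph a (n + 1)) = (-1 : K) ^ (n + 2) * (ω ^ (n+1) - ω⁻¹ ^ (n+1)) := by
    intro n
    induction n with
    | zero => constructor <;> simp [alph]
    | succ m ih =>
        refine ⟨ih.2, ?_⟩
        have h1 := ih.1
        have h2 := ih.2
        show (ω - ω⁻¹) * φ (alph a (m + 2)) = _
        rw [show alph a (m + 2) = a * alph a (m + 1) - alph a m from rfl]
        have hinv : ω * ω⁻¹ = 1 := mul_inv_cancel₀ hω
        rw [map_sub, map_mul, ha]
        ring_nf
        ring_nf at h1 h2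
        linear_combination (-ω - ω⁻¹) * h2 - h1 + ((-ω^m + ω⁻¹^m)*(-1:K)^m) * hinv
  exact (key n).1

/-- pure arithmetic: order of an element whose powers equal `1` iff `d ∣ 2n`. -/
lemma ord_arith {G : Type*} [Group G] (x : G) (d : ℕ) (hd : 0 < d)
    (h : ∀ n : ℕ, x ^ n = 1 ↔ d ∣ 2 * n) : orderOf x = d / Nat.gcd 2 d := by
  set g := Nat.gcd 2 d with hg
  have hgd : g ∣ d := Nat.gcd_dvd_right _ _
  have hg2 : g ∣ 2 := Nat.gcd_dvd_left _ _
  have hgpos : 0 < g := Nat.gcd_pos_of_pos_left d (by norm_num)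
  have hdgpos : 0 < d / g := Nat.div_pos (Nat.le_of_dvd hd hgd) hgpos
  obtain ⟨d', hd'⟩ := hgd
  obtain ⟨t, ht⟩ := hg2
  have hdg' : d / g = d' := by rw [hd', Nat.mul_div_cancel_left _ hgpos]
  have h1 : x ^ (d / g) = 1 := by
    rw [h, hdg']
    exact ⟨t, by rw [ht, hd']; ring⟩
  have ho : orderOf x ∣ d / g := orderOf_dvd_of_pow_eq_one h1
  have h2 : d ∣ 2 * orderOf x := (h _).mp (pow_orderOf_eq_one x)
  have hco : Nat.Coprime (d / g) (2 / g) := (Nat.coprime_div_gcd_div_gcd hgpos).symm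
  have htg : 2 / g = t := by rw [ht, Nat.mul_div_cancel_left _ hgpos]
  rw [hdg'] at hco ho ⊢
  rw [htg] at hco
  have h3 : d' ∣ orderOf x := by
    have hd2 : d' ∣ t * orderOf x := by
      have : g * d' ∣ g * (t * orderOf x) := by
        rw [← hd', ← mul_assoc, ← ht]; exact h2
      exact (mul_dvd_mul_iff_left hgpos.ne').mp this
    exact Nat.Coprime.dvd_of_dvd_mul_left hco hd2
  exact Nat.dvd_antisymm ho h3

theorem stmt1 (F : Type*) [Field F] [Fintype F] (q : ℕ) (hq : Fintype.card F = q)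
    (a : F) (hirr : Irreducible (X ^ 2 + C a * X + 1 : F[X]))
    (ω : AlgebraicClosure F) (hroot : aeval ω (X ^ 2 + C a * X + 1 : F[X]) = 0)
    (hord : orderOf ω = q + 1) :
    orderOf (uu a * ss : PSL2 F) = (q + 1) / Nat.gcd 2 (q + 1) := by
  have hq2 : 2 ≤ q := hq ▸ Fintype.one_lt_card
  have hrel : ω * ω + algebraMap F (AlgebraicClosure F) a * ω + 1 = 0 := by
    have h := hroot
    simp only [map_add, map_mul, map_pow, aeval_X, aeval_C, map_one, sq] at h
    exact h
  have hω0 : ω ≠ 0 := by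
    intro h; rw [h] at hrel; simp at hrel
  have hne : ω - ω⁻¹ ≠ 0 := by
    intro h
    have hωeq : ω = ω⁻¹ := sub_eq_zero.mp h
    have h2 : ω ^ 2 = 1 := by
      rw [sq]; nth_rewrite 2 [hωeq]; exact mul_inv_cancel₀ hω0
    have hdvd : orderOf ω ∣ 2 := orderOf_dvd_of_pow_eq_one h2
    rw [hord] at hdvd
    have := Nat.le_of_dvd (by norm_num) hdvd
    omega
  set M : SL2 F := ⟨!![-a, 1; -1, 0], by simp [Matrix.det_fin_two_of]⟩ with hM
  have hus : (uu a * ss : PSL2 F) = QuotientGroup.mk M := by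
    rw [uu, ss]
    refine Eq.trans (QuotientGroup.mk_mul ..).symm ?_
    congr 1
    apply Subtype.ext
    show (!![1, a; 0, 1] : Matrix (Fin 2) (Fin 2) F) * !![0, 1; -1, 0] = !![-a, 1; -1, 0]
    ext i j
    fin_cases i <;> fin_cases j <;> simp [Matrix.mul_apply, Fin.sum_univ_succ]
  have halph : ∀ n : ℕ, alph a n = 0 ↔ (q + 1) ∣ 2 * n := by
    intro n
    have hinj : Function.Injective (algebraMap F (AlgebraicClosure F)) :=
      (algebraMap F (AlgebraicClosure F)).injective
    have key := alphomega a (algebraMap F (AlgebraicClosure F)) ω hω0 hrel n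
    have hiff : ω ^ n = ω⁻¹ ^ n ↔ ω ^ (2 * n) = 1 := by
      rw [inv_pow, two_mul, pow_add]
      constructor
      · intro hh; nth_rewrite 2 [hh]; exact mul_inv_cancel₀ (pow_ne_zero _ hω0)
      · intro hh; exact eq_inv_of_mul_eq_one_left hh
    rw [← map_eq_zero_iff (algebraMap F (AlgebraicClosure F)) hinj, ← hord, orderOf_dvd_iff_pow_eq_one, ← hiff]
    constructor
    · intro h0; rw [h0, mul_zero] at key
      have h1 := (mul_eq_zero.mp key.symm).resolve_left
        (pow_ne_zero _ (by norm_num : (-1 : AlgebraicClosure F) ≠ 0))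
      exact sub_eq_zero.mp h1
    · intro h0
      have h1 : (ω - ω⁻¹) * algebraMap F (AlgebraicClosure F) (alph a n) = 0 := by
        rw [key, h0, sub_self, mul_zero]
      exact (mul_eq_zero.mp h1).resolve_left hne
  have hpow : ∀ n : ℕ, (QuotientGroup.mk M : PSL2 F) ^ n = 1 ↔ alph a n = 0 := by
    intro n
    rw [← QuotientGroup.mk_pow, QuotientGroup.eq_one_iff]
    cases n with
    | zero =>
        simp only [pow_zero]
        exact ⟨fun _ => rfl, fun _ => Subgroup.one_mem _⟩
    | succ m =>
      have hcoe : ((M ^ (m + 1) : SL2 F) : Matrix (Fin 2) (Fin 2) F) =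
          (-1 : F) ^ (m + 1) •
            !![alph a (m + 2), -(alph a (m + 1)); alph a (m + 1), -(alph a m)] := by
        rw [Matrix.SpecialLinearGroup.coe_pow]
        exact matpow a m
      rw [Matrix.SpecialLinearGroup.mem_center_iff]
      constructor
      · rintro ⟨r, hr, hscal⟩
        have he := congrFun (congrFun (hscal.trans hcoe) 1) 0
        simp [Matrix.scalar_apply, Matrix.diagonal] at he
        exact he
      · intro h0
        have h2 : alph a (m + 2) = -alph a m := by
          rw [show alph a (m + 2) = a * alph a (m + 1) - alph a m from rfl, h0]; ring
        have hsq : ((-1 : F) ^ (m + 1)) ^ 2 = 1 := by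
          rw [← pow_mul, mul_comm, pow_mul]; simp
        refine ⟨(-1 : F) ^ (m + 1) * alph a (m + 2), ?_, ?_⟩
        · have hdet := (M ^ (m + 1)).prop
          rw [hcoe, Matrix.det_smul, Matrix.det_fin_two_of] at hdet
          simp only [Fintype.card_fin] at hdet ⊢
          rw [mul_pow]
          linear_combination hdet + ((-1 : F) ^ (m + 1)) ^ 2 * alph a (m + 2) * h2 -
            ((-1 : F) ^ (m + 1)) ^ 2 * alph a (m + 1) * h0
        · rw [hcoe]
          ext i j
          fin_cases i <;> fin_cases j <;>
            simp [Matrix.scalar_apply, Matrix.diagonal, h0, h2] <;> ring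
  rw [hus]
  refine ord_arith _ (q + 1) (by omega) ?_
  intro n
  rw [hpow n, halph n]

end
end

section
/- Suppose F has characteristic 2. Then every g ∈ PSL₂(F) has a unique presentation g = (u(a)·s)^k · u(x) · h(y) with 0 ≤ k ≤ q, x ∈ F and y ∈ F\{0}: such k, x, y exist, and if (k, x, y) and (k', x', y') both present g in this form then k = k', x = x' and y = y'. -/
open Polynomial

noncomputable section

section Aux

variable {F : Type*} [Field F] (a : F)

lemma alph_rec (n : ℕ) : alph a (n+2) = a * alph a (n+1) - alph a n := rfl

lemma cassini (n : ℕ) : alph a n * alph a (n+2) - alph a (n+1)^2 = -1 := by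
  induction n with
  | zero => simp [alph]
  | succ n ih =>
    have h1 : alph a (n+2) = a * alph a (n+1) - alph a n := rfl
    have h2 : alph a (n+3) = a * alph a (n+2) - alph a (n+1) := rfl
    show alph a (n+1) * alph a (n+3) - alph a (n+2)^2 = -1
    linear_combination alph a (n+1) * h2 + ih - alph a (n+2) * h1

lemma alphD (d m : ℕ) :
    alph a m * alph a (m+d+1) - alph a (m+d) * alph a (m+1) = -alph a d := by
  induction d using Nat.twoStepInduction with
  | zero => simp [alph]
  | one =>
    have := cassini a m
    show alph a m * alph a (m+2) - alph a (m+1) * alph a (m+1) = -alph a 1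
    rw [show alph a 1 = 1 from rfl]
    linear_combination this
  | more d ih1 ih2 =>
    have hd : alph a (d+2) = a * alph a (d+1) - alph a d := rfl
    have hm : alph a (m+d+3) = a * alph a (m+d+2) - alph a (m+d+1) := rfl
    have hm2 : alph a (m+d+2) = a * alph a (m+d+1) - alph a (m+d) := rfl
    have g1 : alph a m * alph a (m+d+2) - alph a (m+d+1) * alph a (m+1) = -alph a (d+1) := ih2
    show alph a m * alph a (m+d+3) - alph a (m+d+2) * alph a (m+1) = -alph a (d+2)
    linear_combination alph a m * hm - alph a (m+1) * hm2 + a * g1 - ih1 + hd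

lemma alph_consec (n : ℕ) (h : alph a n = 0) (h' : alph a (n+1) = 0) : False := by
  have := cassini a n
  rw [h, h'] at this
  simp at this

lemma alph_omega {K : Type*} [Field K] [Algebra F K] (h2 : (2:F) = 0)
    (ω : K) (hω : ω^2 + algebraMap F K a * ω + 1 = 0) (k : ℕ) :
    algebraMap F K (alph a k) * ((ω^2 - 1) * ω^k) = ω^(2*k+1) - ω := by
  have h2K : (2:K) = 0 := by
    have := map_ofNat (algebraMap F K) 2
    rw [← this, h2, map_zero]
  induction k using Nat.twoStepInduction with
  | zero => simp [alph]
  | one => simp only [alph, map_one]; ring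
  | more k IH0 IH1 =>
    have hrec : algebraMap F K (alph a (k+2)) =
        algebraMap F K a * algebraMap F K (alph a (k+1)) - algebraMap F K (alph a k) := by
      rw [alph_rec, map_sub, map_mul]
    show algebraMap F K (alph a (k+2)) * ((ω^2 - 1) * ω^(k+2)) = ω^(2*k+5) - ω
    linear_combination ((ω^2-1)*ω^(k+2)) * hrec + (algebraMap F K a * ω) * IH1
      - ω^2 * IH0 + (ω^(2*k+3) - ω) * hω
      + (ω^3 + ω - ω^(2*k+3) - ω^(2*k+5)) * h2K

lemma alph_ne_zero [Fintype F] {q : ℕ} (hq : Fintype.card F = q) (hchar : ringChar F = 2)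
    (ω : AlgebraicClosure F) (hω : ω^2 + algebraMap F (AlgebraicClosure F) a * ω + 1 = 0)
    (hord : orderOf ω = q + 1) {k : ℕ} (h1 : 1 ≤ k) (h2 : k ≤ q) : alph a k ≠ 0 := by
  haveI : CharP F 2 := hchar ▸ ringChar.charP F
  have h2F : (2:F) = 0 := by exact_mod_cast CharP.cast_eq_zero F 2
  intro hzero
  have key := alph_omega a h2F ω hω k
  rw [hzero, map_zero, zero_mul] at key
  have hcard : 2 ≤ q := by
    rw [← hq]; exact Fintype.one_lt_card
  have hωq : ω ^ (q+1) = 1 := hord ▸ pow_orderOf_eq_one ω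
  have hωne : ω ≠ 0 := by
    intro h
    rw [h, zero_pow (by omega)] at hωq
    exact zero_ne_one hωq
  have hpow : ω^(2*k) = 1 := by
    have h' : ω^(2*k) * ω = 1 * ω := by
      rw [one_mul, ← pow_succ]
      linear_combination -key
    exact mul_right_cancel₀ hωne h'
  have hdvd : (q+1) ∣ 2*k := hord ▸ orderOf_dvd_of_pow_eq_one hpow
  obtain ⟨n, hn⟩ := FiniteField.card F 2
  have hqeven : 2 ∣ q := by
    rw [← hq, hn.2]
    exact dvd_pow_self 2 (by exact_mod_cast n.pos.ne')
  have hcop : Nat.Coprime (q+1) 2 := by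
    have h2nd : ¬ (2 ∣ (q+1)) := by omega
    exact Nat.coprime_comm.mp ((Nat.Prime.coprime_iff_not_dvd Nat.prime_two).mpr h2nd)
  have hdk : (q+1) ∣ k := hcop.dvd_of_dvd_mul_left hdvd
  have := Nat.le_of_dvd (by omega) hdk
  omega

lemma Mpow (h2 : (2:F) = 0) (k : ℕ) :
    (!![a,1;1,0] : Matrix (Fin 2) (Fin 2) F)^k
      = !![alph a (k+1), alph a k; alph a k, alph a (k+1) + a * alph a k] := by
  induction k with
  | zero => simp [alph, Matrix.one_fin_two]
  | succ k ih =>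
    rw [pow_succ, ih, Matrix.mul_fin_two]
    have hr : alph a (k+1+1) = a * alph a (k+1) - alph a k := rfl
    ext i j
    fin_cases i <;> fin_cases j <;> simp
    · linear_combination -hr + alph a k * h2
    · linear_combination (a * alph a k) * h2
    · linear_combination -hr + (alph a k - a * alph a (k+1)) * h2

lemma detM (h2 : (2:F) = 0) (k : ℕ) :
    alph a (k+1) * (alph a (k+1) + a * alph a k) - alph a k * alph a k = 1 := by
  have hr : alph a (k+2) = a * alph a (k+1) - alph a k := rfl
  linear_combination cassini a k - alph a k * hr + (alph a (k+1)^2 - 1) * h2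

lemma prodForm (h2 : (2:F) = 0) (k : ℕ) (x y : F) :
    (!![a,1;1,0] : Matrix (Fin 2) (Fin 2) F)^k * !![1,x;0,1] * !![y,0;0,y⁻¹] =
    !![alph a (k+1) * y, (alph a (k+1) * x + alph a k) * y⁻¹;
       alph a k * y, (alph a k * x + (alph a (k+1) + a * alph a k)) * y⁻¹] := by
  rw [Mpow a h2 k, Matrix.mul_fin_two, Matrix.mul_fin_two]
  ext i j
  fin_cases i <;> fin_cases j <;> simp <;> ring

lemma center_bot (h2 : (2:F) = 0) : Subgroup.center (SL2 F) = ⊥ := by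
  rw [eq_bot_iff]
  intro A hA
  rw [Subgroup.mem_bot]
  obtain ⟨r, hr1, hr2⟩ := Matrix.SpecialLinearGroup.mem_center_iff.mp hA
  have hcard : Fintype.card (Fin 2) = 2 := by simp
  rw [hcard] at hr1
  have hr : r = 1 := by
    have h0 : (r - 1)^2 = 0 := by linear_combination hr1 + (1 - r) * h2
    have := pow_eq_zero_iff (n := 2) (by norm_num) |>.mp h0
    exact sub_eq_zero.mp this
  ext i j
  rw [← hr2, hr]
  simp [Matrix.scalar]

lemma mk_inj (h2 : (2:F) = 0) (A B : SL2 F) :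
    (QuotientGroup.mk A : PSL2 F) = QuotientGroup.mk B ↔ A = B := by
  rw [QuotientGroup.eq, center_bot h2, Subgroup.mem_bot, inv_mul_eq_one, eq_comm]

end Aux

theorem stmt2 (F : Type*) [Field F] [Fintype F] (q : ℕ) (hq : Fintype.card F = q)
    (hchar : ringChar F = 2)
    (a : F) (hirr : Irreducible (X ^ 2 + C a * X + 1 : F[X]))
    (ω : AlgebraicClosure F) (hroot : aeval ω (X ^ 2 + C a * X + 1 : F[X]) = 0)
    (hord : orderOf ω = q + 1) :
    ∀ g : PSL2 F,
      (∃ (k : ℕ) (x y : F) (hy : y ≠ 0), k ≤ q ∧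
        g = (uu a * ss) ^ k * uu x * hh y hy) ∧
      ∀ (k k' : ℕ) (x x' y y' : F) (hy : y ≠ 0) (hy' : y' ≠ 0),
        k ≤ q → k' ≤ q →
        g = (uu a * ss) ^ k * uu x * hh y hy →
        g = (uu a * ss) ^ k' * uu x' * hh y' hy' →
        k = k' ∧ x = x' ∧ y = y' := by
  haveI : CharP F 2 := hchar ▸ ringChar.charP F
  have h2F : (2:F) = 0 := by exact_mod_cast CharP.cast_eq_zero F 2
  have hω' : ω^2 + algebraMap F (AlgebraicClosure F) a * ω + 1 = 0 := by
    simpa using hroot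
  have hanz : ∀ {k : ℕ}, 1 ≤ k → k ≤ q → alph a k ≠ 0 :=
    fun h1 h2 => alph_ne_zero a hq hchar ω hω' hord h1 h2
  -- core uniqueness for indices
  have huk : ∀ j l : ℕ, j ≤ l → l ≤ q →
      alph a j * alph a (l+1) = alph a l * alph a (j+1) → j = l := by
    intro j l hjl hlq he
    obtain ⟨d, rfl⟩ := Nat.exists_eq_add_of_le hjl
    have hD := alphD a d j
    have hd0 : alph a d = 0 := by linear_combination hD - he
    rcases Nat.eq_zero_or_pos d with h|h
    · omega
    · exact absurd hd0 (hanz h (by omega))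
  -- SL2 elements
  have detM1 : Matrix.det (!![a,1;1,0] : Matrix (Fin 2) (Fin 2) F) = 1 := by
    simp [Matrix.det_fin_two_of]
    linear_combination -h2F
  set MSL : SL2 F := ⟨!![a,1;1,0], detM1⟩ with hMSLdef
  have hMSL : uu a * ss = (QuotientGroup.mk MSL : PSL2 F) := by
    erw [uu, ss, ← QuotientGroup.mk_mul, mk_inj h2F]
    ext i j
    erw [Matrix.SpecialLinearGroup.coe_mul]
    fin_cases i <;> fin_cases j <;>
      simp [Matrix.mul_fin_two, hMSLdef]
    · linear_combination -a * h2F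
    · linear_combination -h2F
  have hform : ∀ (k:ℕ) (x y:F) (hy : y ≠ 0),
      (uu a * ss)^k * uu x * hh y hy =
      (QuotientGroup.mk (MSL^k
        * ⟨!![1,x;0,1], by simp [Matrix.det_fin_two_of]⟩
        * ⟨!![y,0;0,y⁻¹], by simp [Matrix.det_fin_two_of, mul_inv_cancel₀ hy]⟩) : PSL2 F) := by
    intro k x y hy
    rw [hMSL, ← QuotientGroup.mk_pow]
    rw [uu, hh]
    rfl
  have hiff : ∀ (G : SL2 F) (k:ℕ) (x y : F) (hy : y ≠ 0),
      ((QuotientGroup.mk G : PSL2 F) = (uu a * ss)^k * uu x * hh y hy ↔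
      (G : Matrix (Fin 2) (Fin 2) F) =
        !![alph a (k+1) * y, (alph a (k+1) * x + alph a k) * y⁻¹;
           alph a k * y, (alph a k * x + (alph a (k+1) + a * alph a k)) * y⁻¹]) := by
    intro G k x y hy
    erw [hform k x y hy, mk_inj h2F, Subtype.ext_iff]
    erw [Matrix.SpecialLinearGroup.coe_mul, Matrix.SpecialLinearGroup.coe_mul,
        Matrix.SpecialLinearGroup.coe_pow]
    rw [show ((MSL : Matrix (Fin 2) (Fin 2) F)) = !![a,1;1,0] from rfl]
    rw [prodForm a h2F k x y]
  intro g
  obtain ⟨G, rfl⟩ := QuotientGroup.mk_surjective g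
  have hdet : G.1 0 0 * G.1 1 1 - G.1 0 1 * G.1 1 0 = 1 := by
    have := G.2
    rwa [Matrix.det_fin_two] at this
  constructor
  · -- existence
    classical
    have hne : ¬ ((G : Matrix (Fin 2) (Fin 2) F) 0 0 = 0 ∧ (G : Matrix (Fin 2) (Fin 2) F) 1 0 = 0) := by
      rintro ⟨h1, h2⟩
      rw [h1, h2] at hdet
      simp at hdet
    let f : Fin (q+1) → Option F :=
      fun k => if alph a k.1 = 0 then none else some (alph a (k.1+1) / alph a k.1)
    have hmono : ∀ j l : Fin (q+1), j.1 ≤ l.1 → f j = f l → j = l := by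
      intro j l hjl hfl
      by_cases hj : alph a j.1 = 0 <;> by_cases hl : alph a l.1 = 0 <;>
        simp only [f, hj, hl, if_true, if_false, eq_self_iff_true] at hfl ⊢
      · have hj0 : j.1 = 0 := by
          by_contra hne0
          exact hanz (by omega) (by have := j.isLt; omega) hj
        have hl0 : l.1 = 0 := by
          by_contra hne0
          exact hanz (by omega) (by have := l.isLt; omega) hl
        exact Fin.ext (hj0.trans hl0.symm)
      · simp at hfl
      · simp at hfl
      · simp only [Option.some_inj] at hfl
        have hcr : alph a j.1 * alph a (l.1+1) = alph a l.1 * alph a (j.1+1) := by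
          field_simp at hfl
          linear_combination -hfl
        exact Fin.ext (huk _ _ hjl (by have := l.isLt; omega) hcr)
    have hinj : Function.Injective f := by
      intro j l h
      rcases le_total j.1 l.1 with hle|hle
      · exact hmono j l hle h
      · exact (hmono l j hle h.symm).symm
    have hbij : Function.Bijective f :=
      (Fintype.bijective_iff_injective_and_card f).mpr ⟨hinj, by simp [hq]⟩
    obtain ⟨kf, hkf⟩ := hbij.2 (if (G : Matrix (Fin 2) (Fin 2) F) 1 0 = 0 then none
      else some ((G : Matrix (Fin 2) (Fin 2) F) 0 0 / (G : Matrix (Fin 2) (Fin 2) F) 1 0))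
    have hkq : kf.1 ≤ q := by have := kf.isLt; omega
    have hprop : alph a kf.1 * (G : Matrix (Fin 2) (Fin 2) F) 0 0
        = alph a (kf.1+1) * (G : Matrix (Fin 2) (Fin 2) F) 1 0 := by
      by_cases h10 : (G : Matrix (Fin 2) (Fin 2) F) 1 0 = 0
      · rw [if_pos h10] at hkf
        have hz : alph a kf.1 = 0 := by
          by_contra hc
          simp [f, hc] at hkf
        rw [hz, h10]
        ring
      · rw [if_neg h10] at hkf
        have hak : alph a kf.1 ≠ 0 := by
          intro hc
          simp [f, hc] at hkf
        have hdiv : alph a (kf.1+1) / alph a kf.1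
            = (G : Matrix (Fin 2) (Fin 2) F) 0 0 / (G : Matrix (Fin 2) (Fin 2) F) 1 0 := by
          simpa [f, hak] using hkf
        field_simp at hdiv
        linear_combination -hdiv
    have hdM := detM a h2F kf.1
    rcases eq_or_ne (alph a (kf.1+1)) 0 with hz | hz
    · -- α_{k+1} = 0 case
      have hak : alph a kf.1 ≠ 0 := fun h0 => alph_consec a kf.1 h0 hz
      have h00 : (G : Matrix (Fin 2) (Fin 2) F) 0 0 = 0 := by
        have h' : alph a kf.1 * (G : Matrix (Fin 2) (Fin 2) F) 0 0 = 0 := by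
          rw [hprop, hz]; ring
        exact (mul_eq_zero.mp h').resolve_left hak
      have h10 : (G : Matrix (Fin 2) (Fin 2) F) 1 0 ≠ 0 := fun hc => hne ⟨h00, hc⟩
      set y := (G : Matrix (Fin 2) (Fin 2) F) 1 0 / alph a kf.1 with hydef
      have hy : y ≠ 0 := div_ne_zero h10 hak
      set x2 := ((G : Matrix (Fin 2) (Fin 2) F) 1 1 * y - a * alph a kf.1) / alph a kf.1
        with hx2def
      have hyy : y * y⁻¹ = 1 := mul_inv_cancel₀ hy
      have hky2 : alph a kf.1 * y = (G : Matrix (Fin 2) (Fin 2) F) 1 0 := by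
        rw [hydef]; field_simp
      have hxx2 : alph a kf.1 * x2
          = (G : Matrix (Fin 2) (Fin 2) F) 1 1 * y - a * alph a kf.1 := by
        rw [hx2def]; field_simp
      rw [hz] at hdM
      have hd01 : (G : Matrix (Fin 2) (Fin 2) F) 0 1 * (G : Matrix (Fin 2) (Fin 2) F) 1 0
          = alph a kf.1 * alph a kf.1 := by
        linear_combination -hdet + (G : Matrix (Fin 2) (Fin 2) F) 1 1 * h00 + hdM
      refine ⟨kf.1, x2, y, hy, hkq, ?_⟩
      rw [hiff, hz]
      ext i j
      fin_cases i <;> fin_cases j <;> simp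
      · exact h00
      · apply mul_right_cancel₀ (mul_ne_zero hy hak)
        linear_combination (-(alph a ↑kf * alph a ↑kf)) * hyy
          + ((G : Matrix (Fin 2) (Fin 2) F) 0 1) * hky2 + hd01
      · linear_combination -hky2
      · apply mul_right_cancel₀ hy
        linear_combination (-(alph a ↑kf * x2 + a * alph a ↑kf)) * hyy - hxx2
    · -- α_{k+1} ≠ 0 case
      have h00 : (G : Matrix (Fin 2) (Fin 2) F) 0 0 ≠ 0 := by
        intro hc
        have h' : alph a (kf.1+1) * (G : Matrix (Fin 2) (Fin 2) F) 1 0 = 0 := by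
          rw [← hprop, hc]; ring
        exact hne ⟨hc, (mul_eq_zero.mp h').resolve_left hz⟩
      set y := (G : Matrix (Fin 2) (Fin 2) F) 0 0 / alph a (kf.1+1) with hydef
      have hy : y ≠ 0 := div_ne_zero h00 hz
      set x1 := ((G : Matrix (Fin 2) (Fin 2) F) 0 1 * y - alph a kf.1) / alph a (kf.1+1)
        with hx1def
      have hyy : y * y⁻¹ = 1 := mul_inv_cancel₀ hy
      have hyG : y * alph a (kf.1+1) = (G : Matrix (Fin 2) (Fin 2) F) 0 0 := by
        rw [hydef]; field_simp
      have hky : alph a kf.1 * y = (G : Matrix (Fin 2) (Fin 2) F) 1 0 := by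
        rw [hydef]
        field_simp
        linear_combination hprop
      have hxx : alph a (kf.1+1) * x1
          = (G : Matrix (Fin 2) (Fin 2) F) 0 1 * y - alph a kf.1 := by
        rw [hx1def]; field_simp
      refine ⟨kf.1, x1, y, hy, hkq, ?_⟩
      rw [hiff]
      ext i j
      fin_cases i <;> fin_cases j <;> simp
      · linear_combination -hyG
      · apply mul_right_cancel₀ hy
        linear_combination (-(alph a (↑kf+1) * x1 + alph a ↑kf)) * hyy - hxx
      · linear_combination -hky
      · apply mul_right_cancel₀ (mul_ne_zero hy hz)
        linear_combination (-(alph a ↑kf * x1 + (alph a (↑kf+1) + a * alph a ↑kf))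
            * alph a (↑kf+1)) * hyy
          - alph a ↑kf * hxx - hdM + ((G : Matrix (Fin 2) (Fin 2) F) 1 1) * hyG
          - ((G : Matrix (Fin 2) (Fin 2) F) 0 1) * hky + hdet
  · -- uniqueness
    intro k k' x x' y y' hy hy' hkq hk'q h h'
    rw [hiff G k x y hy] at h
    rw [hiff G k' x' y' hy'] at h'
    have e := h.symm.trans h'
    have E00 : alph a (k+1) * y = alph a (k'+1) * y' := by
      have := congr_fun (congr_fun e 0) 0; simpa using this
    have E10 : alph a k * y = alph a k' * y' := by
      have := congr_fun (congr_fun e 1) 0; simpa using this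
    have E01 : (alph a (k+1) * x + alph a k) * y⁻¹
        = (alph a (k'+1) * x' + alph a k') * y'⁻¹ := by
      have := congr_fun (congr_fun e 0) 1; simpa using this
    have E11 : (alph a k * x + (alph a (k+1) + a * alph a k)) * y⁻¹
        = (alph a k' * x' + (alph a (k'+1) + a * alph a k')) * y'⁻¹ := by
      have := congr_fun (congr_fun e 1) 1; simpa using this
    have hcross : alph a k * alph a (k'+1) = alph a k' * alph a (k+1) := by
      have h1 : (alph a k * alph a (k'+1)) * (y * y')
          = (alph a k' * alph a (k+1)) * (y * y') := by
        linear_combination (alph a (k'+1) * y') * E10 - (alph a k' * y') * E00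
      exact mul_right_cancel₀ (mul_ne_zero hy hy') h1
    have hkk : k = k' := by
      rcases le_total k k' with hle | hle
      · exact huk k k' hle hk'q hcross
      · exact (huk k' k hle hkq hcross.symm).symm
    subst hkk
    have hyy : y = y' := by
      rcases eq_or_ne (alph a (k+1)) 0 with hz | hz
      · have hz2 : alph a k ≠ 0 := fun h0 => alph_consec a k h0 hz
        exact mul_left_cancel₀ hz2 E10
      · exact mul_left_cancel₀ hz E00
    subst hyy
    refine ⟨rfl, ?_, rfl⟩
    have hyinv : y⁻¹ ≠ 0 := inv_ne_zero hy
    have F1 : alph a (k+1) * x = alph a (k+1) * x' := by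
      have := mul_right_cancel₀ hyinv E01
      linear_combination this
    have F2 : alph a k * x = alph a k * x' := by
      have := mul_right_cancel₀ hyinv E11
      linear_combination this
    rcases eq_or_ne (alph a (k+1)) 0 with hz | hz
    · have hz2 : alph a k ≠ 0 := fun h0 => alph_consec a k h0 hz
      exact mul_left_cancel₀ hz2 F2
    · exact mul_left_cancel₀ hz F1


end
end

section
/- Suppose q is odd, and let b ∈ F be such that for every 0 ≤ k < t there do not exist x ∈ F and y ∈ F\{0} with u(b)·s = (u(a)·s)^k · u(x) · h(y) (i.e. the left coset (u(b)·s)B differs from every coset (u(a)·s)^k B). Then every g ∈ PSL₂(F) has a presentation g = (u(a)·s)^k · (u(b)·s·u(−b))^ℓ · u(x) · h(y) with 0 ≤ k < t, ℓ ∈ {0, 1}, x ∈ F, y ∈ F\{0}, and this presentation is unique in the sense that if (k, ℓ, x, y) and (k', ℓ', x', y') both present g then k = k', ℓ = ℓ', x = x' and y' = ±y. -/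
open Polynomial

noncomputable section

section Aux
open scoped Matrix
set_option linter.unusedVariables false
set_option linter.unreachableTactic false
set_option linter.unnecessarySeqFocus false
set_option linter.unusedTactic false
variable {F : Type*} [Field F]


lemma inv_val_mul_val (A : SL2 F) : (A⁻¹).1 * A.1 = 1 := by
  rw [← Matrix.SpecialLinearGroup.coe_mul, inv_mul_cancel, Matrix.SpecialLinearGroup.coe_one]

lemma psl_mk_eq_mk {A B : SL2 F} :
    (QuotientGroup.mk A : PSL2 F) = QuotientGroup.mk B ↔ (B.1 = A.1 ∨ B.1 = -A.1) := by
  rw [QuotientGroup.eq]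
  constructor
  · intro h
    obtain ⟨r, hr2, hr⟩ := Matrix.SpecialLinearGroup.mem_center_iff.mp h
    have hval : ((A⁻¹ * B : SL2 F) : Matrix (Fin 2) (Fin 2) F) = r • (1 : Matrix (Fin 2) (Fin 2) F) := by
      rw [← hr, Matrix.smul_one_eq_diagonal]
      rfl
    have hB1 : (B : Matrix (Fin 2) (Fin 2) F) = r • (A : Matrix (Fin 2) (Fin 2) F) := by
      have h2 : B = A * (A⁻¹ * B) := by group
      calc (B : Matrix (Fin 2) (Fin 2) F) = ((A * (A⁻¹ * B) : SL2 F) : Matrix (Fin 2) (Fin 2) F) := by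
            rw [← h2]
        _ = (A : Matrix (Fin 2) (Fin 2) F) * (r • (1 : Matrix (Fin 2) (Fin 2) F)) := by
            rw [Matrix.SpecialLinearGroup.coe_mul, hval]
        _ = r • (A : Matrix (Fin 2) (Fin 2) F) := by
            rw [mul_smul_comm, mul_one]
    have hr' : r = 1 ∨ r = -1 := by
      have : r * r = 1 := by simpa [pow_two, Fintype.card_fin] using hr2
      exact mul_self_eq_one_iff.mp this
    rcases hr' with h1 | h1
    · left; rw [hB1, h1, one_smul]
    · right; rw [hB1, h1]; simp
  · intro h
    rcases h with h1 | h1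
    · have : B = A := Subtype.ext h1
      rw [this, inv_mul_cancel]; exact Subgroup.one_mem _
    · apply Matrix.SpecialLinearGroup.mem_center_iff.mpr
      refine ⟨-1, by norm_num, ?_⟩
      have : ((A⁻¹ * B : SL2 F) : Matrix (Fin 2) (Fin 2) F) = -1 := by
        rw [Matrix.SpecialLinearGroup.coe_mul, h1, mul_neg, inv_val_mul_val]
      rw [this, map_neg, map_one]

def Cmat (a : F) : Matrix (Fin 2) (Fin 2) F := !![-a, 1; -1, 0]
def CmS (a : F) : SL2 F := ⟨Cmat a, by simp [Cmat, Matrix.det_fin_two_of]⟩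
def UHm (x y : F) : Matrix (Fin 2) (Fin 2) F := !![y, x*y⁻¹; 0, y⁻¹]
def UHmS (x y : F) (hy : y ≠ 0) : SL2 F :=
  ⟨UHm x y, by simp [UHm, Matrix.det_fin_two_of, mul_inv_cancel₀ hy]⟩

lemma mk_mul (A B : SL2 F) :
    (QuotientGroup.mk (A * B) : PSL2 F) = QuotientGroup.mk A * QuotientGroup.mk B := rfl

lemma mk_pow (A : SL2 F) (n : ℕ) :
    (QuotientGroup.mk (A ^ n) : PSL2 F) = (QuotientGroup.mk A : PSL2 F) ^ n := by
  induction n with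
  | zero => rfl
  | succ n ih => rw [pow_succ, pow_succ, mk_mul, ih]

lemma sl_eq (M N : Matrix (Fin 2) (Fin 2) F) (hM hN) (h : M = N) :
    (⟨M, hM⟩ : SL2 F) = ⟨N, hN⟩ := Subtype.ext h

lemma uu_mul_hh (x y : F) (hy : y ≠ 0) :
    uu x * hh y hy = QuotientGroup.mk (UHmS x y hy) := by
  rw [uu, hh]
  show QuotientGroup.mk (@HMul.hMul (SL2 F) (SL2 F) (SL2 F) _ (Subtype.mk !![1, x; 0, 1] _) (Subtype.mk !![y, 0; 0, y⁻¹] _)) = _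
  congr 1
  apply Subtype.ext
  refine (Matrix.SpecialLinearGroup.coe_mul _ _).trans ?_
  show _ = UHm x y
  rw [UHm]
  rw [show (!![1, x; 0, 1] : Matrix (Fin 2) (Fin 2) F) * !![y, 0; 0, y⁻¹] =
    !![1*y + x*0, 1*0+x*y⁻¹; 0*y+1*0, 0*0+1*y⁻¹] from Matrix.mul_fin_two _ _ _ _ _ _ _ _]
  ring_nf

lemma uu_mul_ss (a : F) : uu a * ss = QuotientGroup.mk (CmS a) := by
  rw [uu, ss]
  show QuotientGroup.mk (@HMul.hMul (SL2 F) (SL2 F) (SL2 F) _ (Subtype.mk !![1, a; 0, 1] _) (Subtype.mk !![0, 1; -1, 0] _)) = _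
  congr 1
  apply Subtype.ext
  refine (Matrix.SpecialLinearGroup.coe_mul _ _).trans ?_
  show _ = Cmat a
  rw [Cmat]
  rw [show (!![1, a; 0, 1] : Matrix (Fin 2) (Fin 2) F) * !![0, 1; -1, 0] =
    !![1*0 + a*(-1), 1*1+a*0; 0*0+1*(-1), 0*1+1*0] from Matrix.mul_fin_two _ _ _ _ _ _ _ _]
  ring_nf

lemma c_pow (a : F) (m : ℕ) :
    (uu a * ss) ^ m = QuotientGroup.mk ((CmS a) ^ m) := by
  rw [uu_mul_ss, ← mk_pow]

open Classical in
def pt0 (A : SL2 F) : Option F :=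
  if A.1 1 0 = 0 then none else some (A.1 0 0 / A.1 1 0)

lemma pt0_congr {A B : SL2 F} (h : (QuotientGroup.mk A : PSL2 F) = QuotientGroup.mk B) :
    pt0 A = pt0 B := by
  rcases psl_mk_eq_mk.mp h with h1 | h1
  · unfold pt0; rw [h1]
  · unfold pt0; rw [h1]
    rw [show ((-A.1 : Matrix (Fin 2) (Fin 2) F) 1 0 = 0) = (A.1 1 0 = 0) from by
      rw [Matrix.neg_apply, neg_eq_zero]]
    simp only [Matrix.neg_apply, neg_div_neg_eq]

def pt (g : PSL2 F) : Option F := pt0 (Quotient.out g)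

lemma pt_mk (A : SL2 F) : pt (QuotientGroup.mk A : PSL2 F) = pt0 A := by
  apply pt0_congr
  exact Quotient.out_eq _

lemma entry00_ne_zero_of (A : SL2 F) (h : A.1 1 0 = 0) : A.1 0 0 ≠ 0 := by
  intro h0
  have hd := A.2
  rw [Matrix.det_fin_two, h, h0] at hd
  simp at hd

lemma pt0_mul_right (A : SL2 F) (x y : F) (hy : y ≠ 0) :
    pt0 (A * UHmS x y hy) = pt0 A := by
  have h10 : (A * UHmS x y hy).1 1 0 = A.1 1 0 * y := by
    rw [Matrix.SpecialLinearGroup.coe_mul, Matrix.mul_apply, Fin.sum_univ_two]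
    show A.1 1 0 * (UHm x y) 0 0 + A.1 1 1 * (UHm x y) 1 0 = _
    simp [UHm]
  have h00 : (A * UHmS x y hy).1 0 0 = A.1 0 0 * y := by
    rw [Matrix.SpecialLinearGroup.coe_mul, Matrix.mul_apply, Fin.sum_univ_two]
    show A.1 0 0 * (UHm x y) 0 0 + A.1 0 1 * (UHm x y) 1 0 = _
    simp [UHm]
  unfold pt0
  rw [h10, h00]
  by_cases hA : A.1 1 0 = 0
  · rw [if_pos hA, if_pos (show A.1 1 0 * y = 0 by rw [hA, zero_mul])]
  · rw [if_neg hA, if_neg (mul_ne_zero hA hy), mul_div_mul_right _ _ hy]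

lemma pt_iff (g g' : PSL2 F) :
    pt g = pt g' ↔ ∃ (x y : F) (hy : y ≠ 0), g' = g * (uu x * hh y hy) := by
  obtain ⟨A, rfl⟩ : ∃ A : SL2 F, (QuotientGroup.mk A : PSL2 F) = g := ⟨Quotient.out g, Quotient.out_eq g⟩
  obtain ⟨B, rfl⟩ : ∃ B : SL2 F, (QuotientGroup.mk B : PSL2 F) = g' := ⟨Quotient.out g', Quotient.out_eq g'⟩
  rw [pt_mk, pt_mk]
  constructor
  · intro h
    have key : A.1 0 0 * B.1 1 0 = A.1 1 0 * B.1 0 0 := by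
      simp only [pt0] at h
      by_cases hA : A.1 1 0 = 0
      · by_cases hB : B.1 1 0 = 0
        · rw [hA, hB]; ring
        · rw [if_pos hA, if_neg hB] at h; exact absurd h (by simp)
      · by_cases hB : B.1 1 0 = 0
        · rw [if_neg hA, if_pos hB] at h; exact absurd h (by simp)
        · rw [if_neg hA, if_neg hB] at h
          have h2 := Option.some_injective _ h
          field_simp at h2
          linear_combination h2
    set H := A⁻¹ * B with hH
    have hHval : H.1 = (A⁻¹).1 * B.1 := Matrix.SpecialLinearGroup.coe_mul _ _
    have hAinv : (A⁻¹).1 = !![A.1 1 1, -A.1 0 1; -A.1 1 0, A.1 0 0] := by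
      have h3 := Matrix.SpecialLinearGroup.SL2_inv_expl A
      rw [h3]
      ext i j
      fin_cases i <;> fin_cases j <;> rfl
    have h10 : H.1 1 0 = 0 := by
      rw [hHval, hAinv, Matrix.mul_apply, Fin.sum_univ_two]
      simp
      linear_combination key
    have h00 : H.1 0 0 ≠ 0 := entry00_ne_zero_of H h10
    have hdet : H.1 0 0 * H.1 1 1 = 1 := by
      have h4 := H.2
      rw [Matrix.det_fin_two, h10] at h4
      linear_combination h4
    refine ⟨H.1 0 1 * H.1 0 0, H.1 0 0, h00, ?_⟩
    rw [uu_mul_hh]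
    have hUH : UHmS (H.1 0 1 * H.1 0 0) (H.1 0 0) h00 = H := by
      apply Subtype.ext
      show UHm _ _ = H.1
      rw [UHm]
      ext i j
      fin_cases i <;> fin_cases j
      · rfl
      · show H.1 0 1 * H.1 0 0 * (H.1 0 0)⁻¹ = H.1 0 1
        rw [mul_assoc, mul_inv_cancel₀ h00, mul_one]
      · exact h10.symm
      · show (H.1 0 0)⁻¹ = H.1 1 1
        field_simp
        linear_combination -hdet
    rw [hUH, hH, ← mk_mul]
    congr 1
    group
  · rintro ⟨x, y, hy, hg⟩
    rw [uu_mul_hh, ← mk_mul] at hg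
    rw [pt0_congr hg, pt0_mul_right]


lemma eigen_root {a : F} {z : AlgebraicClosure F}
    (hz : z ^ 2 + algebraMap F (AlgebraicClosure F) a * z + 1 = 0) :
    (!![-a, 1; -1, 0] : Matrix (Fin 2) (Fin 2) F).map (algebraMap F (AlgebraicClosure F)) *ᵥ
      ![z, -1] = z • ![z, -1] := by
  funext i
  fin_cases i <;>
    simp [Matrix.mulVec, dotProduct, Fin.sum_univ_two, Matrix.map_apply] <;>
    first | linear_combination -hz | ring

lemma eigen_pow {K : Type*} [Field K] (M : Matrix (Fin 2) (Fin 2) K) (v : Fin 2 → K) (z : K)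
    (h : M *ᵥ v = z • v) (m : ℕ) : M ^ m *ᵥ v = z ^ m • v := by
  induction m with
  | zero => simp [Matrix.one_mulVec]
  | succ n ih =>
    rw [pow_succ', pow_succ']
    rw [← Matrix.mulVec_mulVec, ih, Matrix.mulVec_smul, h, smul_smul, mul_comm z]

lemma omega_not_range [Fintype F] {q : ℕ} (hq : Fintype.card F = q)
    {ω : AlgebraicClosure F} (hord : orderOf ω = q + 1) {m : ℕ} (hm0 : 0 < m)
    (hm : 2 * m < q + 1) : ω ^ m ∉ Set.range (algebraMap F (AlgebraicClosure F)) := by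
  rintro ⟨z, hz⟩
  have h1 : (ω ^ m) ^ q = ω ^ m := by
    rw [← hz, ← map_pow, ← hq, FiniteField.pow_card]
  have h2 : (ω ^ (q + 1)) = 1 := by rw [← hord, pow_orderOf_eq_one]
  have h3 : ω ^ m * ω ^ m = 1 := by
    have h5 : (ω ^ m) ^ q * ω ^ m = 1 := by
      rw [← pow_mul, ← pow_add, show m * q + m = (q + 1) * m by ring, pow_mul, h2, one_pow]
    rwa [h1] at h5
  have h4 : (q + 1) ∣ 2 * m := by
    rw [← hord]
    apply orderOf_dvd_of_pow_eq_one
    rw [show 2 * m = m + m by ring, pow_add, h3]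
  exact absurd (Nat.le_of_dvd (by omega) h4) (by omega)

lemma engine [Fintype F] {q : ℕ} (hq : Fintype.card F = q) {a : F}
    {ω : AlgebraicClosure F}
    (hroot : aeval ω (X ^ 2 + C a * X + 1 : F[X]) = 0)
    {m : ℕ} (w0 w1 w3 : F) (G : Matrix (Fin 2) (Fin 2) F) (hG : G.det = 1)
    (heq : (!![-a, 1; -1, 0] : Matrix (Fin 2) (Fin 2) F) ^ m * G = G * !![w0, w1; 0, w3]) :
    ω ^ m ∈ Set.range (algebraMap F (AlgebraicClosure F)) := by
  have hω : ω ^ 2 + algebraMap F (AlgebraicClosure F) a * ω + 1 = 0 := by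
    have h6 := hroot
    simp only [map_add, map_mul, map_pow, aeval_X, aeval_C, map_one] at h6
    exact h6
  set Φ := ((algebraMap F (AlgebraicClosure F)).mapMatrix :
    Matrix (Fin 2) (Fin 2) F →+* Matrix (Fin 2) (Fin 2) (AlgebraicClosure F)) with hΦ
  have hmap : Φ (!![-a, 1; -1, 0] : Matrix (Fin 2) (Fin 2) F) ^ m * Φ G
      = Φ G * Φ !![w0, w1; 0, w3] := by
    rw [← map_pow, ← map_mul, ← map_mul, heq]
  have heig : Φ (!![-a, 1; -1, 0] : Matrix (Fin 2) (Fin 2) F) ^ m *ᵥ ![ω, -1]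
      = ω ^ m • ![ω, -1] := by
    apply eigen_pow
    exact eigen_root hω
  set D := Φ (!![-a, 1; -1, 0] : Matrix (Fin 2) (Fin 2) F) ^ m - ω ^ m • 1 with hD
  have hDv : D *ᵥ ![ω, -1] = 0 := by
    rw [hD, Matrix.sub_mulVec, heig, Matrix.smul_mulVec, Matrix.one_mulVec, sub_self]
  have hvne : (![ω, -1] : Fin 2 → AlgebraicClosure F) ≠ 0 := by
    intro h
    have h7 := congrFun h 1
    simp at h7
  have hdet0 : D.det = 0 := by
    rw [← Matrix.exists_mulVec_eq_zero_iff]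
    exact ⟨![ω, -1], hvne, hDv⟩
  have hconj : D * Φ G = Φ G * (Φ !![w0, w1; 0, w3] - ω ^ m • 1) := by
    rw [hD, Matrix.sub_mul, hmap, Matrix.mul_sub]
    congr 1
    rw [smul_mul_assoc, mul_smul_comm, one_mul, mul_one]
  have hdetG : (Φ G).det = 1 := by
    rw [hΦ, ← RingHom.map_det, hG, map_one]
  have hdet2 : (Φ !![w0, w1; 0, w3] - ω ^ m • 1).det = 0 := by
    have h8 := congrArg Matrix.det hconj
    rw [Matrix.det_mul, Matrix.det_mul, hdetG, hdet0, mul_one, one_mul] at h8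
    exact h8.symm
  have hfact : (algebraMap F (AlgebraicClosure F) w0 - ω ^ m)
      * (algebraMap F (AlgebraicClosure F) w3 - ω ^ m) = 0 := by
    rw [← hdet2, Matrix.det_fin_two]
    have e00 : (Φ !![w0, w1; 0, w3] - ω ^ m • 1) 0 0
        = algebraMap F (AlgebraicClosure F) w0 - ω ^ m := by
      simp [hΦ, Matrix.sub_apply, Matrix.smul_apply, Matrix.one_apply, RingHom.mapMatrix_apply,
        Matrix.map_apply]
    have e11 : (Φ !![w0, w1; 0, w3] - ω ^ m • 1) 1 1
        = algebraMap F (AlgebraicClosure F) w3 - ω ^ m := by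
      simp [hΦ, Matrix.sub_apply, Matrix.smul_apply, Matrix.one_apply, RingHom.mapMatrix_apply,
        Matrix.map_apply]
    have e10 : (Φ !![w0, w1; 0, w3] - ω ^ m • 1) 1 0 = 0 := by
      simp [hΦ, Matrix.sub_apply, Matrix.smul_apply, Matrix.one_apply, RingHom.mapMatrix_apply,
        Matrix.map_apply]
    rw [e00, e11, e10, mul_zero, sub_zero]
  rcases mul_eq_zero.mp hfact with h | h
  · exact ⟨w0, by linear_combination h⟩
  · exact ⟨w3, by linear_combination h⟩

lemma Cmat_pow_t [Fintype F] {q t : ℕ} (hq : Fintype.card F = q) {a : F}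
    {ω : AlgebraicClosure F} (hroot : aeval ω (X ^ 2 + C a * X + 1 : F[X]) = 0)
    (hord : orderOf ω = q + 1) (h2t : 2 * t = q + 1) (hq3 : 3 ≤ q) :
    (!![-a, 1; -1, 0] : Matrix (Fin 2) (Fin 2) F) ^ t = -1 := by
  have hω : ω ^ 2 + algebraMap F (AlgebraicClosure F) a * ω + 1 = 0 := by
    have h6 := hroot
    simp only [map_add, map_mul, map_pow, aeval_X, aeval_C, map_one] at h6
    exact h6
  set ω' : AlgebraicClosure F := -(algebraMap F (AlgebraicClosure F) a) - ω with hω'def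
  have hω' : ω' ^ 2 + algebraMap F (AlgebraicClosure F) a * ω' + 1 = 0 := by
    rw [hω'def]; ring_nf; linear_combination hω
  have hωω' : ω * ω' = 1 := by rw [hω'def]; linear_combination -hω
  have hne : ω ≠ ω' := by
    intro h
    have h2 : ω ^ 2 = 1 := by rw [pow_two]; nth_rewrite 2 [h]; exact hωω'
    have := orderOf_dvd_of_pow_eq_one h2
    rw [hord] at this
    have := Nat.le_of_dvd (by norm_num) this
    omega
  have htpos : 0 < t := by omega
  have hωt : ω ^ t = -1 := by
    have h2 : (ω ^ t) ^ 2 = 1 := by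
      rw [← pow_mul, show t * 2 = q + 1 by omega, ← hord, pow_orderOf_eq_one]
    rcases sq_eq_one_iff.mp h2 with h | h
    · exfalso
      have h3 := orderOf_dvd_of_pow_eq_one h
      rw [hord] at h3
      have := Nat.le_of_dvd htpos h3
      omega
    · exact h
  have hω't : ω' ^ t = -1 := by
    have hinv : ω' = ω⁻¹ := eq_inv_of_mul_eq_one_left (by rw [mul_comm] at hωω'; exact hωω')
    rw [hinv, inv_pow, hωt, inv_neg, inv_one]
  set Φ := ((algebraMap F (AlgebraicClosure F)).mapMatrix :
    Matrix (Fin 2) (Fin 2) F →+* Matrix (Fin 2) (Fin 2) (AlgebraicClosure F)) with hΦ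
  set N := Φ (!![-a, 1; -1, 0] : Matrix (Fin 2) (Fin 2) F) ^ t + 1 with hN
  have key : ∀ z : AlgebraicClosure F, z ^ 2 + algebraMap F (AlgebraicClosure F) a * z + 1 = 0 →
      z ^ t = -1 → N *ᵥ ![z, -1] = 0 := by
    intro z hz hzt
    have heig : Φ (!![-a, 1; -1, 0] : Matrix (Fin 2) (Fin 2) F) ^ t *ᵥ ![z, -1]
        = z ^ t • ![z, -1] := by
      apply eigen_pow
      exact eigen_root hz
    rw [hN, Matrix.add_mulVec, heig, hzt, Matrix.one_mulVec, neg_one_smul, neg_add_cancel]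
  have hv := key ω hω hωt
  have hv' := key ω' hω' hω't
  have hNij : ∀ (z : AlgebraicClosure F) i, N *ᵥ ![z, -1] = 0 → N i 0 * z - N i 1 = 0 := by
    intro z i h
    have := congrFun h i
    simpa [Matrix.mulVec, dotProduct, Fin.sum_univ_two, sub_eq_add_neg] using this
  have hN0 : N = 0 := by
    ext i j
    have e1 := hNij ω i hv
    have e2 := hNij ω' i hv'
    have hi0 : N i 0 = 0 := by
      have : N i 0 * (ω - ω') = 0 := by linear_combination e1 - e2
      rcases mul_eq_zero.mp this with h | h
      · exact h
      · exact absurd (sub_eq_zero.mp h) hne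
    fin_cases j
    · exact hi0
    · show N i 1 = 0
      linear_combination -e1 + ω * hi0
  have hmapeq : Φ ((!![-a, 1; -1, 0] : Matrix (Fin 2) (Fin 2) F) ^ t + 1) = 0 := by
    rw [map_add, map_pow, map_one, ← hN, hN0]
  have hent : (!![-a, 1; -1, 0] : Matrix (Fin 2) (Fin 2) F) ^ t + 1 = 0 := by
    ext i j
    have h9 : algebraMap F (AlgebraicClosure F)
        (((!![-a, 1; -1, 0] : Matrix (Fin 2) (Fin 2) F) ^ t + 1) i j) = 0 := by
      rw [show algebraMap F (AlgebraicClosure F)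
          (((!![-a, 1; -1, 0] : Matrix (Fin 2) (Fin 2) F) ^ t + 1) i j)
          = Φ ((!![-a, 1; -1, 0] : Matrix (Fin 2) (Fin 2) F) ^ t + 1) i j from rfl, hmapeq]
      simp
    have h10 : ((!![-a, 1; -1, 0] : Matrix (Fin 2) (Fin 2) F) ^ t + 1) i j = (0 : F) :=
      (algebraMap F (AlgebraicClosure F)).injective
        (show algebraMap F (AlgebraicClosure F) _ = algebraMap F (AlgebraicClosure F) 0 by
          rw [h9, map_zero])
    simpa using h10
  exact eq_neg_of_add_eq_zero_left hent


lemma UHm_entries (x y : F) : UHm x y = !![y, x*y⁻¹; 0, y⁻¹] := rfl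

lemma neg_UHm (x y : F) : -(UHm x y) = !![-y, -(x*y⁻¹); 0, -y⁻¹] := by
  ext i j
  fin_cases i <;> fin_cases j <;> simp [UHm]

lemma hh_one : hh (1 : F) one_ne_zero = 1 := by
  rw [hh]
  have : (⟨!![(1:F), 0; 0, 1⁻¹], by simp [Matrix.det_fin_two_of]⟩ : SL2 F) = (1 : SL2 F) := by
    apply Subtype.ext
    rw [Matrix.SpecialLinearGroup.coe_one]
    ext i j
    fin_cases i <;> fin_cases j <;> simp [Matrix.one_apply]
  rw [this]
  rfl

lemma UHmS_mul (x x' y y' : F) (hy : y ≠ 0) (hy' : y' ≠ 0) :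
    UHmS x y hy * UHmS x' y' hy' = UHmS (x + x'*y^2) (y*y') (mul_ne_zero hy hy') := by
  apply Subtype.ext
  rw [Matrix.SpecialLinearGroup.coe_mul]
  show (UHm x y) * (UHm x' y') = UHm (x + x'*y^2) (y*y')
  rw [UHm, UHm, UHm]
  rw [Matrix.mul_fin_two]
  ext i j
  fin_cases i <;> fin_cases j
  · show y * y' + x*y⁻¹ * 0 = y * y'
    ring
  · show y * (x'*y'⁻¹) + x*y⁻¹ * y'⁻¹ = (x + x'*y^2)*(y*y')⁻¹
    field_simp
    ring
  · show 0 * y' + y⁻¹ * 0 = 0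
    ring
  · show 0 * (x'*y'⁻¹) + y⁻¹ * y'⁻¹ = (y*y')⁻¹
    rw [mul_inv]
    ring

lemma uh_congr {x x' y y' : F} {hy : y ≠ 0} {hy' : y' ≠ 0} (hx : x = x') (hyy : y = y') :
    uu x * hh y hy = uu x' * hh y' hy' := by
  subst hx; subst hyy; rfl

lemma uh_mul (x x' y y' : F) (hy : y ≠ 0) (hy' : y' ≠ 0) :
    (uu x * hh y hy) * (uu x' * hh y' hy')
      = uu (x + x'*y^2) * hh (y*y') (mul_ne_zero hy hy') := by
  rw [uu_mul_hh, uu_mul_hh, ← mk_mul, UHmS_mul, ← uu_mul_hh]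

lemma uu_eq_uh (x : F) : uu x = uu x * hh 1 one_ne_zero := by rw [hh_one, mul_one]

lemma uu_zero : uu (0 : F) = 1 := by
  rw [uu]
  have h1 : (⟨!![(1:F), 0; 0, 1], by simp [Matrix.det_fin_two_of]⟩ : SL2 F) = (1 : SL2 F) := by
    apply Subtype.ext
    rw [Matrix.SpecialLinearGroup.coe_one]
    ext i j
    fin_cases i <;> fin_cases j <;> simp [Matrix.one_apply]
  rw [h1]
  rfl

lemma uh_inv (x y : F) (hy : y ≠ 0) :
    (uu x * hh y hy)⁻¹ = uu (-x * y⁻¹ * y⁻¹) * hh y⁻¹ (inv_ne_zero hy) := by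
  apply inv_eq_of_mul_eq_one_right
  rw [uh_mul]
  rw [uh_congr (show x + -x * y⁻¹ * y⁻¹ * y^2 = 0 by field_simp; ring) (mul_inv_cancel₀ hy) (hy' := one_ne_zero)]
  rw [uu_zero, one_mul, hh_one]

lemma uu_mul_uh (z x y : F) (hy : y ≠ 0) :
    uu z * (uu x * hh y hy) = uu (z + x) * hh y hy := by
  rw [uu_eq_uh z, uh_mul]
  exact uh_congr (by ring) (one_mul y)

def WS (b : F) : SL2 F := ⟨!![-b, b^2+1; -1, b], by
  simp [Matrix.det_fin_two_of]; ring⟩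

lemma w_eq (b : F) : uu b * ss * uu (-b) = QuotientGroup.mk (WS b) := by
  rw [uu_mul_ss, uu]
  show QuotientGroup.mk (@HMul.hMul (SL2 F) (SL2 F) (SL2 F) _ (CmS b) (Subtype.mk !![1, -b; 0, 1] _)) = _
  congr 1
  apply Subtype.ext
  refine (Matrix.SpecialLinearGroup.coe_mul _ _).trans ?_
  show (Cmat b) * !![1, -b; 0, 1] = !![-b, b^2+1; -1, b]
  rw [Cmat]
  rw [show (!![-b, 1; -1, 0] : Matrix (Fin 2) (Fin 2) F) * !![1, -b; 0, 1] =
    !![-b*1 + 1*0, -b*(-b)+1*1; -1*1+0*0, -1*(-b)+0*1] from Matrix.mul_fin_two _ _ _ _ _ _ _ _]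
  ring_nf

lemma pow_mod_t {G : Type*} [Group G] {c : G} {t : ℕ} (hc : c ^ t = 1) (n : ℕ) :
    c ^ n = c ^ (n % t) := by
  conv_lhs => rw [← Nat.div_add_mod n t]
  rw [pow_add, pow_mul, hc, one_pow, one_mul]

lemma uh_eq_uh {x x' y y' : F} {hy : y ≠ 0} {hy' : y' ≠ 0}
    (h : uu x * hh y hy = uu x' * hh y' hy') : x = x' ∧ (y' = y ∨ y' = -y) := by
  rw [uu_mul_hh, uu_mul_hh] at h
  rcases psl_mk_eq_mk.mp h with h1 | h1
  · have h2 : UHm x' y' = UHm x y := h1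
    have e00 : y' = y := by
      have := Matrix.ext_iff.mpr h2 0 0
      simpa [UHm] using this
    have e01 : x' * y'⁻¹ = x * y⁻¹ := by
      have := Matrix.ext_iff.mpr h2 0 1
      simpa [UHm] using this
    refine ⟨?_, Or.inl e00⟩
    rw [e00] at e01
    have := mul_right_cancel₀ (inv_ne_zero hy) e01
    exact this.symm
  · have h2 : UHm x' y' = -(UHm x y) := h1
    have e00 : y' = -y := by
      have := Matrix.ext_iff.mpr h2 0 0
      simpa [UHm] using this
    have e01 : x' * y'⁻¹ = -(x * y⁻¹) := by
      have := Matrix.ext_iff.mpr h2 0 1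
      simpa [UHm] using this
    refine ⟨?_, Or.inr e00⟩
    rw [e00] at e01
    rw [inv_neg, mul_neg] at e01
    have e02 := neg_injective e01
    exact (mul_right_cancel₀ (inv_ne_zero hy) e02).symm

lemma conj_engine [Fintype F] {q : ℕ} (hq : Fintype.card F = q) {a : F}
    {ω : AlgebraicClosure F} (hroot : aeval ω (X ^ 2 + C a * X + 1 : F[X]) = 0)
    (hord : orderOf ω = q + 1) {t m : ℕ} (h2t : 2 * t = q + 1) (hm0 : 0 < m) (hmt : m < t)
    (G : SL2 F) (x y : F) (hy : y ≠ 0)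
    (h : (uu a * ss) ^ m * QuotientGroup.mk G = QuotientGroup.mk G * (uu x * hh y hy)) :
    False := by
  rw [c_pow, uu_mul_hh, ← mk_mul, ← mk_mul] at h
  have hrange : ω ^ m ∈ Set.range (algebraMap F (AlgebraicClosure F)) := by
    have hcoe : ((CmS a ^ m * G : SL2 F) : Matrix (Fin 2) (Fin 2) F)
        = Cmat a ^ m * G.1 := by
      rw [Matrix.SpecialLinearGroup.coe_mul, Matrix.SpecialLinearGroup.coe_pow]
      rfl
    have hcoe2 : ((G * UHmS x y hy : SL2 F) : Matrix (Fin 2) (Fin 2) F)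
        = G.1 * UHm x y := by
      rw [Matrix.SpecialLinearGroup.coe_mul]
      rfl
    rcases psl_mk_eq_mk.mp h with h1 | h1
    · rw [hcoe, hcoe2] at h1
      exact engine hq hroot y (x*y⁻¹) y⁻¹ G.1 G.2 h1.symm
    · rw [hcoe, hcoe2] at h1
      exact engine hq hroot (-y) (-(x*y⁻¹)) (-y⁻¹) G.1 G.2 (by
        rw [← neg_UHm, mul_neg, h1, neg_neg]
        rfl)
  exact omega_not_range hq hord hm0 (by omega) hrange

end Aux

theorem stmt3 (F : Type*) [Field F] [Fintype F] (q : ℕ) (hq : Fintype.card F = q)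
    (a : F) (hirr : Irreducible (X ^ 2 + C a * X + 1 : F[X]))
    (ω : AlgebraicClosure F) (hroot : aeval ω (X ^ 2 + C a * X + 1 : F[X]) = 0)
    (hord : orderOf ω = q + 1)
    (hqodd : Odd q) (t : ℕ) (ht : t = (q + 1) / Nat.gcd 2 (q + 1)) (b : F)
    (hb : ∀ k : ℕ, k < t → ¬ ∃ (x y : F) (hy : y ≠ 0),
      (uu b * ss : PSL2 F) = (uu a * ss) ^ k * uu x * hh y hy) :
    ∀ g : PSL2 F,
      (∃ (k l : ℕ) (x y : F) (hy : y ≠ 0), k < t ∧ l ≤ 1 ∧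
        g = (uu a * ss) ^ k * (uu b * ss * uu (-b)) ^ l * uu x * hh y hy) ∧
      ∀ (k k' l l' : ℕ) (x x' y y' : F) (hy : y ≠ 0) (hy' : y' ≠ 0),
        k < t → k' < t → l ≤ 1 → l' ≤ 1 →
        g = (uu a * ss) ^ k * (uu b * ss * uu (-b)) ^ l * uu x * hh y hy →
        g = (uu a * ss) ^ k' * (uu b * ss * uu (-b)) ^ l' * uu x' * hh y' hy' →
        k = k' ∧ l = l' ∧ x = x' ∧ (y' = y ∨ y' = -y) := by
  classical
  have hq2 : 2 ≤ q := by
    have := Fintype.one_lt_card (α := F)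
    omega
  have hqmod : q % 2 = 1 := Nat.odd_iff.mp hqodd
  have hq3 : 3 ≤ q := by omega
  have hdvd : 2 ∣ q + 1 := by omega
  have hgcd : Nat.gcd 2 (q + 1) = 2 := Nat.gcd_eq_left hdvd
  have h2t : 2 * t = q + 1 := by rw [ht, hgcd]; exact Nat.mul_div_cancel' hdvd
  have htpos : 0 < t := by omega
  set c : PSL2 F := uu a * ss with hc
  set w : PSL2 F := uu b * ss * uu (-b) with hw
  have hct : c ^ t = 1 := by
    rw [hc, c_pow, QuotientGroup.eq_one_iff]
    apply Matrix.SpecialLinearGroup.mem_center_iff.mpr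
    refine ⟨-1, by norm_num, ?_⟩
    rw [map_neg, map_one, Matrix.SpecialLinearGroup.coe_pow]
    exact (Cmat_pow_t hq hroot hord h2t hq3).symm
  have hbb : ∀ (n : ℕ) (X Y : F) (hY : Y ≠ 0), uu b * ss ≠ c ^ n * (uu X * hh Y hY) := by
    intro n X Y hY hcontra
    rw [pow_mod_t hct n] at hcontra
    exact hb (n % t) (Nat.mod_lt n htpos) ⟨X, Y, hY, by rw [hcontra, mul_assoc, hc]⟩
  have hwW : w = QuotientGroup.mk (WS b) := by rw [hw, w_eq]
  -- aux1
  have aux1 : ∀ k k' : ℕ, k < t → k' < t → pt (c ^ k) = pt (c ^ k') → k = k' := by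
    have H : ∀ k k' : ℕ, k ≤ k' → k' < t → pt (c ^ k) = pt (c ^ k') → k = k' := by
      intro k k' hle hk' hpt
      by_contra hne
      obtain ⟨x, y, hy, he⟩ := (pt_iff _ _).mp hpt
      have hm0 : 0 < k' - k := by omega
      have he2 : c ^ (k' - k) = uu x * hh y hy := by
        have h5 : c ^ k * c ^ (k' - k) = c ^ k * (uu x * hh y hy) := by
          rw [← pow_add, Nat.add_sub_cancel' hle]; exact he
        exact mul_left_cancel h5
      refine conj_engine hq hroot hord h2t hm0 (by omega) 1 x y hy ?_
      rw [show (QuotientGroup.mk (1 : SL2 F) : PSL2 F) = 1 from rfl, mul_one, one_mul]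
      rw [← hc]
      exact he2
    intro k k' hk hk' hpt
    rcases le_total k k' with h | h
    · exact H k k' h hk' hpt
    · exact (H k' k h hk hpt.symm).symm
  -- aux3
  have aux3 : ∀ k k' : ℕ, k < t → k' < t → pt (c ^ k * w) = pt (c ^ k' * w) → k = k' := by
    have H : ∀ k k' : ℕ, k ≤ k' → k' < t → pt (c ^ k * w) = pt (c ^ k' * w) → k = k' := by
      intro k k' hle hk' hpt
      by_contra hne
      obtain ⟨x, y, hy, he⟩ := (pt_iff _ _).mp hpt
      have hm0 : 0 < k' - k := by omega
      have he2 : c ^ (k' - k) * w = w * (uu x * hh y hy) := by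
        have h5 : c ^ k * (c ^ (k' - k) * w) = c ^ k * (w * (uu x * hh y hy)) := by
          rw [← mul_assoc, ← pow_add, Nat.add_sub_cancel' hle, he, mul_assoc]
        exact mul_left_cancel h5
      refine conj_engine hq hroot hord h2t hm0 (by omega) (WS b) x y hy ?_
      rw [← hwW, ← hc]
      exact he2
    intro k k' hk hk' hpt
    rcases le_total k k' with h | h
    · exact H k k' h hk' hpt
    · exact (H k' k h hk hpt.symm).symm
  -- aux2
  have aux2 : ∀ k k' : ℕ, k < t → k' < t → pt (c ^ k) ≠ pt (c ^ k' * w) := by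
    intro k k' hk hk' hpt
    obtain ⟨x, y, hy, he⟩ := (pt_iff _ _).mp hpt.symm
    have hexp : c ^ (t - k' + k) = w * (uu x * hh y hy) := by
      calc c ^ (t - k' + k) = c ^ (t - k') * c ^ k := pow_add c _ _
        _ = c ^ (t - k') * (c ^ k' * (w * (uu x * hh y hy))) := by
            rw [he, mul_assoc]
        _ = (c ^ (t - k') * c ^ k') * (w * (uu x * hh y hy)) := (mul_assoc _ _ _).symm
        _ = w * (uu x * hh y hy) := by
            rw [← pow_add, Nat.sub_add_cancel (le_of_lt hk'), hct, one_mul]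
    have hw2 : w * (uu x * hh y hy) = (uu b * ss) * (uu (x - b) * hh y hy) := by
      rw [hw, mul_assoc (uu b * ss) (uu (-b)) (uu x * hh y hy), uu_mul_uh,
        uh_congr (show -b + x = x - b by ring) rfl]
    have h6 : uu b * ss = c ^ (t - k' + k) * (uu (x - b) * hh y hy)⁻¹ := by
      rw [hexp, hw2, mul_assoc, mul_inv_cancel, mul_one]
    rw [uh_inv] at h6
    exact hbb _ _ _ _ h6
  -- the map
  set Ψ : Fin t × Bool → Option F := fun p => pt (c ^ (p.1 : ℕ) * w ^ (cond p.2 1 0)) with hΨ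
  have hinj : Function.Injective Ψ := by
    rintro ⟨k, l⟩ ⟨k', l'⟩ hkl
    simp only [hΨ] at hkl
    cases l <;> cases l' <;>
      simp only [Bool.cond_false, Bool.cond_true, pow_zero, mul_one, pow_one] at hkl
    · have := aux1 k k' k.2 k'.2 hkl
      exact Prod.ext (Fin.ext this) rfl
    · exact absurd hkl (aux2 k k' k.2 k'.2)
    · exact absurd hkl.symm (aux2 k' k k'.2 k.2)
    · have := aux3 k k' k.2 k'.2 hkl
      exact Prod.ext (Fin.ext this) rfl
  have hbij : Function.Bijective Ψ := by
    rw [Fintype.bijective_iff_injective_and_card]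
    constructor
    · exact hinj
    · rw [Fintype.card_prod, Fintype.card_fin, Fintype.card_bool, Fintype.card_option, hq]
      omega
  intro g
  constructor
  · obtain ⟨⟨k, l⟩, hkl⟩ := hbij.2 (pt g)
    obtain ⟨x, y, hy, hgeq⟩ := (pt_iff _ _).mp hkl
    rw [← mul_assoc] at hgeq
    exact ⟨k, cond l 1 0, x, y, hy, k.2, (by cases l <;> simp), hgeq⟩
  · intro k k' l l' x x' y y' hy hy' hkt hk't hl hl' he1 he2
    have hp1 : pt g = pt (c ^ k * w ^ l) := by
      rw [he1, mul_assoc]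
      exact ((pt_iff (c ^ k * w ^ l) _).mpr ⟨x, y, hy, rfl⟩).symm
    have hp2 : pt g = pt (c ^ k' * w ^ l') := by
      rw [he2, mul_assoc]
      exact ((pt_iff (c ^ k' * w ^ l') _).mpr ⟨x', y', hy', rfl⟩).symm
    have hkl' : k = k' ∧ l = l' := by
      rcases Nat.le_one_iff_eq_zero_or_eq_one.mp hl with rfl | rfl <;>
        rcases Nat.le_one_iff_eq_zero_or_eq_one.mp hl' with rfl | rfl
      · have h7 := hinj (a₁ := (⟨k, hkt⟩, false)) (a₂ := (⟨k', hk't⟩, false))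
          (hp1.symm.trans hp2)
        have h8 : k = k' := congrArg (fun p => ((p.1 : Fin t) : ℕ)) h7
        exact ⟨h8, rfl⟩
      · exfalso
        have h9 := hp1.symm.trans hp2
        rw [pow_zero, mul_one, pow_one] at h9
        exact aux2 k k' hkt hk't h9
      · exfalso
        have h9 := hp2.symm.trans hp1
        rw [pow_zero, mul_one, pow_one] at h9
        exact aux2 k' k hk't hkt h9
      · have h8 : k = k' := by
          apply aux3 k k' hkt hk't
          have h9 := hp1.symm.trans hp2
          rwa [pow_one] at h9
        exact ⟨h8, rfl⟩
    obtain ⟨hkk, hll⟩ := hkl'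
    subst hkk; subst hll
    have hcans : uu x * hh y hy = uu x' * hh y' hy' := by
      have h10 : (c ^ k * w ^ l) * (uu x * hh y hy) = (c ^ k * w ^ l) * (uu x' * hh y' hy') := by
        rw [← mul_assoc, ← mul_assoc, ← he1, ← he2]
      exact mul_left_cancel h10
    obtain ⟨hx, hyy⟩ := uh_eq_uh hcans
    exact ⟨rfl, rfl, hx, hyy⟩

end
end

section
/- Suppose F has characteristic 2 (so t = q + 1). Then the q field elements a₁, a₂, …, a_q are pairwise distinct; consequently they are exactly the q elements of F. -/
open Polynomial

noncomputable section

lemma key_alph {F K : Type*} [Field F] [Field K] (φ : F →+* K) (a : F) (ω ν : K)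
    (hmul : ω * ν = 1) (ha : φ a = ω + ν) :
    ∀ n : ℕ, φ (alph a n) * (ω - ν) = ω ^ n - ν ^ n := by
  have H : ∀ n : ℕ, φ (alph a n) * (ω - ν) = ω ^ n - ν ^ n ∧
      φ (alph a (n+1)) * (ω - ν) = ω ^ (n+1) - ν ^ (n+1) := by
    intro n
    induction n with
    | zero => simp [alph]
    | succ n ih =>
      refine ⟨ih.2, ?_⟩
      have h1 := ih.1
      have h2 := ih.2
      show φ (alph a (n+2)) * (ω - ν) = ω ^ (n+2) - ν ^ (n+2)
      rw [show alph a (n+2) = a * alph a (n+1) - alph a n from rfl, map_sub, map_mul, ha]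
      linear_combination (ω + ν) * h2 - h1 + (ω ^ n - ν ^ n) * hmul
  exact fun n => (H n).1

theorem stmt5 (F : Type*) [Field F] [Fintype F] (q : ℕ) (hq : Fintype.card F = q)
    (hchar : ringChar F = 2)
    (a : F) (hirr : Irreducible (X ^ 2 + C a * X + 1 : F[X]))
    (ω : AlgebraicClosure F) (hroot : aeval ω (X ^ 2 + C a * X + 1 : F[X]) = 0)
    (hord : orderOf ω = q + 1) :
    (∀ i j : ℕ, 1 ≤ i → i ≤ q → 1 ≤ j → j ≤ q → aSeq a i = aSeq a j → i = j) ∧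
    ∀ c : F, ∃ k : ℕ, 1 ≤ k ∧ k ≤ q ∧ aSeq a k = c := by
  have hF2 : CharP F 2 := by rw [← hchar]; exact ringChar.charP F
  haveI : Fact (Nat.Prime 2) := ⟨Nat.prime_two⟩
  haveI hK2 : CharP (AlgebraicClosure F) 2 :=
    charP_of_injective_algebraMap (algebraMap F (AlgebraicClosure F)).injective 2
  set φ : F →+* AlgebraicClosure F := algebraMap F (AlgebraicClosure F) with hφ
  have hroot' : ω ^ 2 + φ a * ω + 1 = 0 := by simpa [hφ] using hroot
  have hω0 : ω ≠ 0 := by rintro rfl; simp at hroot'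
  set ν : AlgebraicClosure F := ω⁻¹ with hν
  have hmul : ω * ν = 1 := mul_inv_cancel₀ hω0
  have ha : φ a = ω + ν := by
    have h3 : (φ a + (ω + ν)) * ω = 0 := by linear_combination hroot' + hmul
    have h4 : φ a + (ω + ν) = 0 := by
      rcases mul_eq_zero.mp h3 with h | h
      · exact h
      · exact absurd h hω0
    rw [add_eq_zero_iff_eq_neg] at h4
    rw [h4, CharTwo.neg_eq]
  -- q is even, q ≥ 2
  have hq2 : 2 ≤ q := hq ▸ Fintype.one_lt_card
  have hqeven : Even q := by
    obtain ⟨n, -, hc⟩ := FiniteField.card F 2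
    rw [hq] at hc
    rw [hc]
    exact Nat.even_pow.mpr ⟨even_two, n.pos.ne'⟩
  -- ω - ν ≠ 0
  have hδ : ω - ν ≠ 0 := by
    intro h
    have hω2 : ω ^ 2 = 1 := by
      have h' := sub_eq_zero.mp h
      calc ω ^ 2 = ω * ω := sq ω
        _ = ω * ν := by rw [← h']
        _ = 1 := hmul
    have hdvd : orderOf ω ∣ 2 := orderOf_dvd_of_pow_eq_one hω2
    rw [hord] at hdvd
    have := Nat.le_of_dvd two_pos hdvd
    omega
  have key := key_alph φ a ω ν hmul ha
  -- order divisibility helper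
  have hdiv : ∀ d : ℕ, d ≤ q → ω ^ d = ν ^ d → d = 0 := by
    intro d hdq h
    have h1 : ω ^ (2 * d) = 1 := by
      calc ω ^ (2 * d) = ω ^ d * ω ^ d := by rw [two_mul, pow_add]
        _ = ω ^ d * ν ^ d := by rw [← h]
        _ = (ω * ν) ^ d := (mul_pow ω ν d).symm
        _ = 1 := by rw [hmul, one_pow]
    have hdvd : (q + 1) ∣ 2 * d := hord ▸ orderOf_dvd_of_pow_eq_one h1
    rcases Nat.eq_zero_or_pos d with rfl | hd
    · rfl
    exfalso
    have hle := Nat.le_of_dvd (by omega) hdvd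
    have h2 : (q + 1) ∣ (2 * d - (q + 1)) := Nat.dvd_sub hdvd dvd_rfl
    have h3 : 2 * d - (q + 1) = 0 := Nat.eq_zero_of_dvd_of_lt h2 (by omega) |>.symm ▸ rfl
    obtain ⟨m, hm⟩ := hqeven
    omega
  -- alph a n ≠ 0 for 1 ≤ n ≤ q
  have hnz : ∀ n : ℕ, 1 ≤ n → n ≤ q → alph a n ≠ 0 := by
    intro n h1 h2 h
    have hk := key n
    rw [h, map_zero, zero_mul] at hk
    have hn : ω ^ n = ν ^ n := sub_eq_zero.mp hk.symm
    have := hdiv n h2 hn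
    omega
  -- aSeq formula
  have hseq : ∀ k : ℕ, 1 ≤ k → k ≤ q → aSeq a k * alph a k = alph a (k + 1) := by
    intro k
    induction k with
    | zero => omega
    | succ k ih =>
      intro _ hkq
      match k with
      | 0 =>
        show aSeq a 1 * alph a 1 = alph a 2
        simp [aSeq, alph]
      | k + 1 =>
        have hk1 : 1 ≤ k + 1 := by omega
        have hkq' : k + 1 ≤ q := by omega
        have ih' := ih hk1 hkq'
        have hne : alph a (k + 1) ≠ 0 := hnz _ hk1 hkq'
        have hne2 : alph a (k + 2) ≠ 0 := hnz _ (by omega) hkq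
        have hane : aSeq a (k + 1) ≠ 0 := by
          intro h; rw [h, zero_mul] at ih'; exact hne2 ih'.symm
        show (a - (aSeq a (k+1))⁻¹) * alph a (k + 2) = alph a (k + 3)
        rw [show alph a (k + 3) = a * alph a (k + 2) - alph a (k + 1) from rfl]
        field_simp
        linear_combination ih'
  -- injectivity for i ≤ j
  have hinj_le : ∀ i j : ℕ, 1 ≤ i → i ≤ j → j ≤ q → aSeq a i = aSeq a j → i = j := by
    intro i j hi hij hjq heq
    obtain ⟨d, rfl⟩ : ∃ d, j = i + d := ⟨j - i, by omega⟩
    have h1 := hseq i hi (by omega)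
    have h2 := hseq (i + d) (by omega) hjq
    have hcross : alph a (i + 1) * alph a (i + d) = alph a (i + d + 1) * alph a i := by
      rw [← h1, ← h2, heq]; ring
    have hcrossK : (ω ^ (i+1) - ν ^ (i+1)) * (ω ^ (i+d) - ν ^ (i+d))
        = (ω ^ (i+d+1) - ν ^ (i+d+1)) * (ω ^ i - ν ^ i) := by
      have e1 := key (i + 1)
      have e2 := key (i + d)
      have e3 := key (i + d + 1)
      have e4 := key i
      have hK : φ (alph a (i+1)) * φ (alph a (i+d)) * ((ω - ν) * (ω - ν))
           = φ (alph a (i+d+1)) * φ (alph a i) * ((ω - ν) * (ω - ν)) := by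
        rw [← map_mul, ← map_mul, hcross]
      calc (ω ^ (i+1) - ν ^ (i+1)) * (ω ^ (i+d) - ν ^ (i+d))
          = (φ (alph a (i+1)) * (ω - ν)) * (φ (alph a (i+d)) * (ω - ν)) := by rw [e1, e2]
        _ = (φ (alph a (i+d+1)) * (ω - ν)) * (φ (alph a i) * (ω - ν)) := by
              linear_combination hK
        _ = (ω ^ (i+d+1) - ν ^ (i+d+1)) * (ω ^ i - ν ^ i) := by rw [e3, e4]
    have hi1 : (ω * ν) ^ i = 1 := by rw [hmul, one_pow]
    have h0 : (ω - ν) * (ω ^ d - ν ^ d) = 0 := by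
      linear_combination hcrossK - (ω - ν) * (ω ^ d - ν ^ d) * hi1
    have hd : ω ^ d = ν ^ d := by
      rcases mul_eq_zero.mp h0 with h | h
      · exact absurd h hδ
      · exact sub_eq_zero.mp h
    have := hdiv d (by omega) hd
    omega
  have hinj : ∀ i j : ℕ, 1 ≤ i → i ≤ q → 1 ≤ j → j ≤ q → aSeq a i = aSeq a j → i = j := by
    intro i j hi hiq hj hjq heq
    rcases le_total i j with h | h
    · exact hinj_le i j hi h hjq heq
    · exact (hinj_le j i hj h hiq heq.symm).symm
  refine ⟨hinj, ?_⟩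
  classical
  have hcard : (Finset.image (fun k => aSeq a k) (Finset.Icc 1 q)).card = q := by
    rw [Finset.card_image_of_injOn, Nat.card_Icc]
    · omega
    · intro i hi j hj h
      simp only [Finset.coe_Icc, Set.mem_Icc] at hi hj
      exact hinj i j hi.1 hi.2 hj.1 hj.2 h
  have huniv : Finset.image (fun k => aSeq a k) (Finset.Icc 1 q) = Finset.univ := by
    apply Finset.eq_univ_of_card
    rw [hcard, hq]
  intro c
  have hc : c ∈ Finset.image (fun k => aSeq a k) (Finset.Icc 1 q) := by
    rw [huniv]; exact Finset.mem_univ c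
  obtain ⟨k, hk, hkc⟩ := Finset.mem_image.mp hc
  simp only [Finset.mem_Icc] at hk
  exact ⟨k, hk.1, hk.2, hkc⟩

end
end

section
/- Suppose q is odd (so t = (q+1)/2). Then the q field elements a₁, a₂, …, a_{t−1}, b₀, b₁, …, b_{t−1} are pairwise distinct; consequently they are exactly the q elements of F. -/
open Polynomial

noncomputable section

theorem stmt6 (F : Type*) [Field F] [Fintype F] (q : ℕ) (hq : Fintype.card F = q)
    (a : F) (hirr : Irreducible (X ^ 2 + C a * X + 1 : F[X]))
    (ω : AlgebraicClosure F) (hroot : aeval ω (X ^ 2 + C a * X + 1 : F[X]) = 0)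
    (hord : orderOf ω = q + 1)
    (hqodd : Odd q) (t : ℕ) (ht : t = (q + 1) / Nat.gcd 2 (q + 1)) (b : F)
    (hb : ∀ k : ℕ, 1 ≤ k → k ≤ t - 1 → b ≠ aSeq a k) :
    (∀ i j : ℕ, 1 ≤ i → i ≤ t - 1 → 1 ≤ j → j ≤ t - 1 → aSeq a i = aSeq a j → i = j) ∧
    (∀ i j : ℕ, i ≤ t - 1 → j ≤ t - 1 → bSeq a b i = bSeq a b j → i = j) ∧
    (∀ i j : ℕ, 1 ≤ i → i ≤ t - 1 → j ≤ t - 1 → aSeq a i ≠ bSeq a b j) ∧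
    ∀ c : F, (∃ k : ℕ, 1 ≤ k ∧ k ≤ t - 1 ∧ aSeq a k = c) ∨
      (∃ l : ℕ, l ≤ t - 1 ∧ bSeq a b l = c) := by
  obtain ⟨m, hm⟩ := hqodd
  set f := algebraMap F (AlgebraicClosure F) with hf
  have hroot' : ω^2 + f a * ω + 1 = 0 := by simpa using hroot
  have hq2 : 2 ≤ q := hq ▸ Fintype.one_lt_card
  have hq3 : 3 ≤ q := by omega
  have hω0 : ω ≠ 0 := by intro h; rw [h] at hroot'; simp at hroot'
  have hω21 : ω^2 ≠ 1 := by
    intro h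
    have h2 : orderOf ω ∣ 2 := orderOf_dvd_of_pow_eq_one h
    rw [hord] at h2
    have := Nat.le_of_dvd (by norm_num) h2
    omega
  have hstep : f a * ω = -(ω^2) - 1 := by linear_combination hroot'
  have key : ∀ n : ℕ, f (alph a n) * (ω^2 - 1) * ω^n
      = (-1)^(n+1) * (ω^(2*n) - 1) * ω := by
    intro n
    induction n using Nat.twoStepInduction with
    | zero => simp [show alph a 0 = 0 from rfl]
    | one => simp [show alph a 1 = 1 from rfl]
    | more n ih1 ih2 =>
      have hrw : f (alph a (n+2)) = f a * f (alph a (n+1)) - f (alph a n) := by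
        rw [show alph a (n+2) = a * alph a (n+1) - alph a n from rfl]
        push_cast [map_sub, map_mul]; ring
      rw [hrw]
      linear_combination (f a * ω) * ih2 - ω^2 * ih1 +
        (-(-1)^(n+1) * (ω^(2*n)*ω^2 - 1) * ω) * hstep
  have hgcd : Nat.gcd 2 (q+1) = 2 := Nat.gcd_eq_left ⟨m+1, by omega⟩
  have h2t : 2 * t = q + 1 := by rw [ht, hgcd]; omega
  have ht2 : 2 ≤ t := by omega
  have hfinj : Function.Injective f := RingHom.injective f
  have hzero : ∀ n : ℕ, alph a n = 0 ↔ t ∣ n := by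
    intro n
    have h1 : alph a n = 0 ↔ ω^(2*n) = 1 := by
      constructor
      · intro h
        have hk := key n
        rw [h, map_zero, zero_mul, zero_mul] at hk
        rcases mul_eq_zero.mp hk.symm with h' | h'
        · rcases mul_eq_zero.mp h' with h'' | h''
          · exact absurd h'' (pow_ne_zero _ (by norm_num))
          · exact sub_eq_zero.mp h''
        · exact absurd h' hω0
      · intro h
        have hk := key n
        rw [h, sub_self, mul_zero, zero_mul] at hk
        have hz : f (alph a n) = 0 := by
          rcases mul_eq_zero.mp hk with h' | h'
          · rcases mul_eq_zero.mp h' with h'' | h''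
            · exact h''
            · exact absurd h'' (sub_ne_zero.mpr hω21)
          · exact absurd h' (pow_ne_zero _ hω0)
        rw [← map_zero f] at hz
        exact hfinj hz
    rw [h1, ← orderOf_dvd_iff_pow_eq_one, hord, ← h2t]
    exact ⟨fun h => (Nat.mul_dvd_mul_iff_left (by norm_num : 0 < 2)).mp h,
      fun h => (Nat.mul_dvd_mul_iff_left (by norm_num : 0 < 2)).mpr h⟩
  have hαne : ∀ n : ℕ, 1 ≤ n → n ≤ t-1 → alph a n ≠ 0 := by
    intro n h1 h2 h
    have := Nat.le_of_dvd (by omega) ((hzero n).mp h)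
    omega
  have hαt : alph a t = 0 := (hzero t).mpr dvd_rfl
  -- the fundamental quadratic identity
  have hid : ∀ d i : ℕ, alph a (i+1) * alph a (d+i) - alph a i * alph a (d+i+1)
      = alph a d := by
    intro d i
    induction i with
    | zero => simp [show alph a 1 = 1 from rfl, show alph a 0 = 0 from rfl]
    | succ i ih =>
      have h1 : alph a (i+2) = a * alph a (i+1) - alph a i := rfl
      have h2 : alph a (d+i+2) = a * alph a (d+i+1) - alph a (d+i) := rfl
      show alph a (i+2) * alph a (d+(i+1)) - alph a (i+1) * alph a (d+(i+1)+1)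
        = alph a d
      rw [show d+(i+1) = d+i+1 from by omega, show d+i+1+1 = d+i+2 from rfl, h1, h2]
      linear_combination ih
  -- reversal symmetry
  have hrev : ∀ n : ℕ, n ≤ t → alph a (t-n) = alph a (t-1) * alph a n := by
    intro n h2
    rcases Nat.eq_zero_or_pos n with h1 | h1
    · subst h1
      rw [Nat.sub_zero, hαt, show alph a 0 = (0:F) from rfl, mul_zero]
    have h3 := hid (t-n) (n-1)
    rw [show n-1+1 = n from by omega, show t-n+(n-1)+1 = t from by omega,
      show t-n+(n-1) = t-1 from by omega, hαt] at h3
    linear_combination -h3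
  -- no root of x² - a x + 1 in F
  have hnoroot : ∀ x : F, x*x - a*x + 1 ≠ 0 := by
    intro x hx
    have hisr : (X^2 + C a * X + 1 : F[X]).IsRoot (-x) := by
      simp only [IsRoot, eval_add, eval_pow, eval_mul, eval_X, eval_C, eval_one]
      linear_combination hx
    have hdeg := Polynomial.degree_eq_one_of_irreducible_of_root hirr hisr
    have : (X^2 + C a * X + 1 : F[X]).degree = 2 := by compute_degree!
    rw [this] at hdeg
    exact absurd hdeg (by norm_num)
  -- formula for aSeq
  have haf : ∀ k : ℕ, 1 ≤ k → k ≤ t-1 → aSeq a k * alph a k = alph a (k+1) := by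
    intro k
    induction k with
    | zero => omega
    | succ k ih =>
      intro _ hk1
      by_cases hk0 : k = 0
      · subst hk0
        show (a - (aSeq a 0)⁻¹) * alph a 1 = alph a 2
        rw [show aSeq a 0 = (0:F) from rfl,
          show alph a 2 = a * alph a 1 - alph a 0 from rfl,
          show alph a 1 = (1:F) from rfl, show alph a 0 = (0:F) from rfl]
        simp
      · have hk : 1 ≤ k := by omega
        have ihk := ih hk (by omega)
        have hαk : alph a k ≠ 0 := hαne k hk (by omega)
        have hαk1 : alph a (k+1) ≠ 0 := hαne (k+1) (by omega) hk1
        have hak : aSeq a k ≠ 0 := by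
          intro h0; rw [h0, zero_mul] at ihk; exact hαk1 ihk.symm
        show (a - (aSeq a k)⁻¹) * alph a (k+1) = alph a (k+2)
        rw [show alph a (k+2) = a * alph a (k+1) - alph a k from rfl]
        have : (aSeq a k)⁻¹ * alph a (k+1) = alph a k := by
          rw [← ihk, inv_mul_cancel_left₀ hak]
        linear_combination -this
  -- bet facts
  have hbet0 : bet a b 0 = 1 := rfl
  have hbets : ∀ n : ℕ, bet a b (n+1) = b * alph a (n+1) - alph a n := fun n => rfl
  have hbetne : ∀ l : ℕ, l ≤ t-1 → bet a b l ≠ 0 := by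
    intro l hl
    rcases l with _ | e
    · rw [hbet0]; exact one_ne_zero
    · intro h0
      rw [hbets] at h0
      have hble : b * alph a (e+1) = alph a e := by linear_combination h0
      -- then b = aSeq a (t-(e+1))
      have hk1 : 1 ≤ t-(e+1) := by omega
      have hk2 : t-(e+1) ≤ t-1 := by omega
      have hfa := haf (t-(e+1)) hk1 hk2
      have hr1 : alph a (t-(e+1)) = alph a (t-1) * alph a (e+1) :=
        hrev (e+1) (by omega)
      have hr2 : alph a (t-(e+1)+1) = alph a (t-1) * alph a e := by
        rw [show t-(e+1)+1 = t-e from by omega]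
        exact hrev e (by omega)
      have hne : alph a (t-(e+1)) ≠ 0 := hαne _ hk1 hk2
      have : b * alph a (t-(e+1)) = aSeq a (t-(e+1)) * alph a (t-(e+1)) := by
        rw [hfa, hr1, hr2]
        linear_combination alph a (t-1) * hble
      have hb' := mul_right_cancel₀ hne this
      exact hb (t-(e+1)) hk1 hk2 hb'
  -- formula for bSeq
  have hbf : ∀ l : ℕ, l ≤ t-1 → bSeq a b l * bet a b l = bet a b (l+1) := by
    intro l
    induction l with
    | zero =>
      intro _
      show b * 1 = b * alph a 1 - alph a 0
      simp [show alph a 1 = 1 from rfl, show alph a 0 = 0 from rfl]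
    | succ l ih =>
      intro hl1
      have ihl := ih (by omega)
      have hbl : bet a b l ≠ 0 := hbetne l (by omega)
      have hbl1 : bet a b (l+1) ≠ 0 := hbetne (l+1) hl1
      have hbsl : bSeq a b l ≠ 0 := by
        intro h0; rw [h0, zero_mul] at ihl; exact hbl1 ihl.symm
      show (a - (bSeq a b l)⁻¹) * bet a b (l+1) = bet a b (l+2)
      have hrec : bet a b (l+2) = a * bet a b (l+1) - bet a b l := by
        rcases l with _ | l'
        · show b * alph a 2 - alph a 1 = a * (b * alph a 1 - alph a 0) - 1
          rw [show alph a 2 = a * alph a 1 - alph a 0 from rfl,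
            show alph a 1 = (1:F) from rfl, show alph a 0 = (0:F) from rfl]
          ring
        · show b * alph a (l'+3) - alph a (l'+2)
            = a * (b * alph a (l'+2) - alph a (l'+1)) - (b * alph a (l'+1) - alph a l')
          rw [show alph a (l'+3) = a * alph a (l'+2) - alph a (l'+1) from rfl,
            show alph a (l'+2) = a * alph a (l'+1) - alph a l' from rfl]
          ring
      rw [hrec]
      have : (bSeq a b l)⁻¹ * bet a b (l+1) = bet a b l := by
        rw [← ihl, inv_mul_cancel_left₀ hbsl]
      linear_combination -this
  -- injectivity of the step map : shifting back
  have hshift : ∀ (s : ℕ → F), (∀ n, s (n+1) = a - (s n)⁻¹) →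
      ∀ k i j : ℕ, s (i+k) = s (j+k) → s i = s j := by
    intro s hs k
    induction k with
    | zero => intro i j h; exact h
    | succ k ih =>
      intro i j h
      apply ih
      rw [show i+(k+1) = (i+k)+1 from by omega, show j+(k+1) = (j+k)+1 from by omega,
        hs, hs] at h
      have h2 : (s (i+k))⁻¹ = (s (j+k))⁻¹ := by linear_combination -h
      exact inv_injective h2
  have ha1 : aSeq a 1 = a := by
    show a - (aSeq a 0)⁻¹ = a
    rw [show aSeq a 0 = (0:F) from rfl]; simp
  have hb0 : bSeq a b 0 = b := rfl
  -- helper : b cannot equal alph a g / alph a (g+1)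
  have hbval : ∀ g : ℕ, g ≤ t-2 → b * alph a (g+1) = alph a g → False := by
    intro g hg hble
    have hk1 : 1 ≤ t-(g+1) := by omega
    have hk2 : t-(g+1) ≤ t-1 := by omega
    have hfa := haf (t-(g+1)) hk1 hk2
    have hr1 : alph a (t-(g+1)) = alph a (t-1) * alph a (g+1) := hrev (g+1) (by omega)
    have hr2 : alph a (t-(g+1)+1) = alph a (t-1) * alph a g := by
      rw [show t-(g+1)+1 = t-g from by omega]
      exact hrev g (by omega)
    have hne : alph a (t-(g+1)) ≠ 0 := hαne _ hk1 hk2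
    have hh : b * alph a (t-(g+1)) = aSeq a (t-(g+1)) * alph a (t-(g+1)) := by
      rw [hfa, hr1, hr2]
      linear_combination alph a (t-1) * hble
    exact hb (t-(g+1)) hk1 hk2 (mul_right_cancel₀ hne hh)
  -- Part 1
  have part1 : ∀ i j : ℕ, 1 ≤ i → i ≤ t-1 → 1 ≤ j → j ≤ t-1 →
      aSeq a i = aSeq a j → i = j := by
    have main : ∀ i j : ℕ, 1 ≤ i → 1 ≤ j → j ≤ t-1 → i ≤ j →
        aSeq a i = aSeq a j → i = j := by
      intro i j hi1 hj1 hj2 hij heq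
      by_contra hne
      set d := j - i with hd
      have hd1 : 1 ≤ d := by omega
      have hd2 : d ≤ t-2 := by omega
      have h0 : aSeq a (1+(i-1)) = aSeq a ((d+1)+(i-1)) := by
        rw [show 1+(i-1) = i from by omega, show (d+1)+(i-1) = j from by omega]
        exact heq
      have h1 : aSeq a 1 = aSeq a (d+1) :=
        hshift (aSeq a) (fun n => rfl) (i-1) 1 (d+1) h0
      have h2 := haf (d+1) (by omega) (by omega)
      rw [← h1, ha1] at h2
      rw [show alph a (d+1+1) = a * alph a (d+1) - alph a d from rfl] at h2
      have hz : alph a d = 0 := by linear_combination h2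
      exact hαne d hd1 (by omega) hz
    intro i j h1 h2 h3 h4 heq
    rcases le_total i j with h | h
    · exact main i j h1 h3 h4 h heq
    · exact (main j i h3 h1 h2 h heq.symm).symm
  -- Part 2
  have part2 : ∀ i j : ℕ, i ≤ t-1 → j ≤ t-1 → bSeq a b i = bSeq a b j → i = j := by
    have main : ∀ i j : ℕ, j ≤ t-1 → i ≤ j → bSeq a b i = bSeq a b j → i = j := by
      intro i j hj2 hij heq
      by_contra hne
      set d := j - i with hd
      have hd1 : 1 ≤ d := by omega
      have hd2 : d ≤ t-1 := by omega
      have h0 : bSeq a b (0+i) = bSeq a b (d+i) := by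
        rw [show 0+i = i from by omega, show d+i = j from by omega]; exact heq
      have h1 : bSeq a b 0 = bSeq a b d :=
        hshift (bSeq a b) (fun n => rfl) i 0 d h0
      have h2 := hbf d hd2
      rw [← h1, hb0] at h2
      obtain ⟨e, he⟩ : ∃ e, d = e+1 := ⟨d-1, by omega⟩
      rw [he] at h2 hd2
      rw [hbets, hbets,
        show alph a (e+1+1) = a * alph a (e+1) - alph a e from rfl] at h2
      have hz : alph a (e+1) * (b*b - a*b + 1) = 0 := by linear_combination h2
      rcases mul_eq_zero.mp hz with h' | h'
      · exact hαne (e+1) (by omega) hd2 h'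
      · exact hnoroot b h'
    intro i j h1 h2 heq
    rcases le_total i j with h | h
    · exact main i j h2 h heq
    · exact (main j i h1 h heq.symm).symm
  -- Part 3
  have part3 : ∀ i j : ℕ, 1 ≤ i → i ≤ t-1 → j ≤ t-1 → aSeq a i ≠ bSeq a b j := by
    intro i j hi1 hi2 hj2 heq
    rcases Nat.eq_zero_or_pos j with hj0 | hj1
    · subst hj0
      exact hb i hi1 hi2 (hb0.symm.trans heq.symm)
    obtain ⟨e, he⟩ : ∃ e, j = e+1 := ⟨j-1, by omega⟩
    subst he
    have hA := haf i hi1 hi2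
    have hB := hbf (e+1) hj2
    have hcross : alph a (i+1) * bet a b (e+1) = alph a i * bet a b (e+1+1) := by
      rw [← hA, ← hB, heq]; ring
    rw [hbets, hbets] at hcross
    rcases lt_trichotomy i (e+1) with hlt | heqij | hgt
    · -- i < j
      set g := e - i with hg
      have hge : e = g + i := by omega
      have hid1 := hid (g+1) i
      rw [show g+1+i+1 = e+1+1 from by omega, show g+1+i = e+1 from by omega] at hid1
      have hid2 := hid g i
      rw [show g+i+1 = e+1 from by omega, show g+i = e from by omega] at hid2
      have hkey : b * alph a (g+1) = alph a g := by
        linear_combination hcross - b * hid1 + hid2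
      exact hbval g (by omega) hkey
    · -- i = j
      subst heqij
      have hid1 := hid 1 e
      rw [show 1+e+1 = e+1+1 from by omega, show 1+e = e+1 from by omega] at hid1
      have h1 : alph a 1 = (1:F) := rfl
      have : (1:F) = 0 := by linear_combination hcross - hid1 - h1
      exact one_ne_zero this
    · -- i > j
      set d := i - (e+1) with hd
      have hd1 : 1 ≤ d := by omega
      have hd2 : d ≤ t-2 := by omega
      have hid1 := hid d (e+1)
      rw [show d+(e+1)+1 = i+1 from by omega, show d+(e+1) = i from by omega] at hid1
      have hid2 := hid (d+1) e
      rw [show d+1+e+1 = i+1 from by omega, show d+1+e = i from by omega] at hid2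
      have hkey : b * alph a d = alph a (d+1) := by
        linear_combination -hcross - b * hid1 + hid2
      have hfd := haf d hd1 (by omega)
      have hαd : alph a d ≠ 0 := hαne d hd1 (by omega)
      have hh : b * alph a d = aSeq a d * alph a d := by rw [hfd]; exact hkey
      exact hb d hd1 (by omega) (mul_right_cancel₀ hαd hh)
  refine ⟨part1, part2, part3, ?_⟩
  -- Part 4 : counting
  intro c
  by_contra hc
  push_neg at hc
  obtain ⟨hc1, hc2⟩ := hc
  classical
  set A := (Finset.Icc 1 (t-1)).image (aSeq a) with hA
  set B := (Finset.Icc 0 (t-1)).image (bSeq a b) with hB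
  have hinjA : Set.InjOn (aSeq a) (Finset.Icc 1 (t-1)) := by
    intro x hx y hy hxy
    rw [Finset.coe_Icc, Set.mem_Icc] at hx hy
    exact part1 x y hx.1 hx.2 hy.1 hy.2 hxy
  have hinjB : Set.InjOn (bSeq a b) (Finset.Icc 0 (t-1)) := by
    intro x hx y hy hxy
    rw [Finset.coe_Icc, Set.mem_Icc] at hx hy
    exact part2 x y hx.2 hy.2 hxy
  have hcardA : A.card = t-1 := by
    rw [hA, Finset.card_image_of_injOn hinjA, Nat.card_Icc]; omega
  have hcardB : B.card = t := by
    rw [hB, Finset.card_image_of_injOn hinjB, Nat.card_Icc]; omega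
  have hdisj : Disjoint A B := by
    rw [Finset.disjoint_left]
    intro x hxA hxB
    rw [hA, Finset.mem_image] at hxA
    rw [hB, Finset.mem_image] at hxB
    obtain ⟨i, hi, hix⟩ := hxA
    obtain ⟨j, hj, hjx⟩ := hxB
    rw [Finset.mem_Icc] at hi hj
    exact part3 i j hi.1 hi.2 hj.2 (hix.trans hjx.symm)
  have hsub : A ∪ B ⊆ Finset.univ.erase c := by
    intro x hx
    rw [Finset.mem_erase]
    refine ⟨?_, Finset.mem_univ x⟩
    rcases Finset.mem_union.mp hx with h | h
    · rw [hA, Finset.mem_image] at h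
      obtain ⟨i, hi, hix⟩ := h
      rw [Finset.mem_Icc] at hi
      intro hxc
      exact hc1 i hi.1 hi.2 (hix.trans hxc)
    · rw [hB, Finset.mem_image] at h
      obtain ⟨j, hj, hjx⟩ := h
      rw [Finset.mem_Icc] at hj
      intro hxc
      exact hc2 j hj.2 (hjx.trans hxc)
  have hcard := Finset.card_le_card hsub
  rw [Finset.card_union_of_disjoint hdisj, hcardA, hcardB,
    Finset.card_erase_of_mem (Finset.mem_univ c), Finset.card_univ, hq] at hcard
  omega

end
end

section
/- The sequence (a_k) satisfies a_{t−1} = 0. -/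
open Polynomial

noncomputable section

theorem stmt7 (F : Type*) [Field F] [Fintype F] (q : ℕ) (hq : Fintype.card F = q)
    (a : F) (hirr : Irreducible (X ^ 2 + C a * X + 1 : F[X]))
    (ω : AlgebraicClosure F) (hroot : aeval ω (X ^ 2 + C a * X + 1 : F[X]) = 0)
    (hord : orderOf ω = q + 1) (t : ℕ) (ht : t = (q + 1) / Nat.gcd 2 (q + 1)) :
    aSeq a (t - 1) = 0 := by
  classical
  set φ : F →+* AlgebraicClosure F := (algebraMap F (AlgebraicClosure F) : F →+* AlgebraicClosure F) with hφ
  have hq2 : 2 ≤ q := by rw [← hq]; exact Fintype.one_lt_card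
  have hω1 : ω ^ (q + 1) = 1 := by rw [← hord]; exact pow_orderOf_eq_one ω
  have hω0 : ω ≠ 0 := by
    intro h
    rw [h, zero_pow (by omega)] at hω1
    exact zero_ne_one hω1
  have hroot' : ω ^ 2 + φ a * ω + 1 = 0 := by
    simpa [hφ] using hroot
  set μ : AlgebraicClosure F := -ω with hμdef
  have hμ0 : μ ≠ 0 := neg_ne_zero.mpr hω0
  set ν : AlgebraicClosure F := μ⁻¹ with hνdef
  have hμν : μ * ν = 1 := mul_inv_cancel₀ hμ0
  have ha : φ a = μ + ν := by
    have hνω : ν = -ω⁻¹ := by rw [hνdef, hμdef, inv_neg]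
    rw [hνω, hμdef]
    have hinv : ω * ω⁻¹ = 1 := mul_inv_cancel₀ hω0
    field_simp
    linear_combination hroot'
  -- μ - ν ≠ 0
  have hδ : μ - ν ≠ 0 := by
    intro h
    have hμν' : μ = ν := sub_eq_zero.mp h
    have hμ2 : μ ^ 2 = 1 := by
      rw [sq]
      nth_rewrite 2 [hμν']
      exact hμν
    have hω2 : ω ^ 2 = 1 := by rw [← hμ2, hμdef]; ring
    have hdvd : orderOf ω ∣ 2 := orderOf_dvd_of_pow_eq_one hω2
    rw [hord] at hdvd
    have := Nat.le_of_dvd (by norm_num) hdvd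
    omega
  -- key formula
  have key : ∀ n, φ (alph a n) * (μ - ν) = μ ^ n - ν ^ n := by
    have H : ∀ n, φ (alph a n) * (μ - ν) = μ ^ n - ν ^ n ∧
        φ (alph a (n + 1)) * (μ - ν) = μ ^ (n + 1) - ν ^ (n + 1) := by
      intro n
      induction n with
      | zero => constructor <;> simp [alph]
      | succ k ih =>
        obtain ⟨h1, h2⟩ := ih
        refine ⟨h2, ?_⟩
        have hrec : alph a (k + 2) = a * alph a (k + 1) - alph a k := rfl
        rw [hrec, map_sub, map_mul, ha]
        linear_combination (μ + ν) * h2 - h1 + (μ ^ k - ν ^ k) * hμν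
    exact fun n => (H n).1
  have hinj : Function.Injective φ := φ.injective
  -- zero characterization
  have hzero : ∀ n, alph a n = 0 ↔ orderOf (μ ^ 2) ∣ n := by
    intro n
    rw [orderOf_dvd_iff_pow_eq_one, ← pow_mul]
    constructor
    · intro h
      have hk := key n
      rw [h, map_zero, zero_mul] at hk
      have heq : μ ^ n = ν ^ n := by linear_combination -hk
      calc μ ^ (2 * n) = μ ^ n * μ ^ n := by rw [two_mul, pow_add]
        _ = μ ^ n * ν ^ n := by rw [heq]
        _ = (μ * ν) ^ n := (mul_pow μ ν n).symm
        _ = 1 := by rw [hμν, one_pow]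
    · intro h
      have heq : μ ^ n = ν ^ n := by
        rw [hνdef, inv_pow]
        rw [two_mul, pow_add] at h
        field_simp
        linear_combination h
      have hk := key n
      rw [heq, sub_self] at hk
      have : φ (alph a n) = 0 := by
        rcases mul_eq_zero.mp hk with h' | h'
        · exact h'
        · exact absurd h' hδ
      rw [← map_zero φ] at this
      exact hinj this
  -- t = orderOf (μ^2)
  have htord : orderOf (μ ^ 2) = t := by
    have hμ2ω : μ ^ 2 = ω ^ 2 := by rw [hμdef]; ring
    rw [hμ2ω, orderOf_pow' ω (two_ne_zero), hord, ht, Nat.gcd_comm]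
  have ht2 : 2 ≤ t := by
    have hg := Nat.gcd_dvd_left 2 (q + 1)
    have hg' := Nat.gcd_dvd_right 2 (q + 1)
    rcases (Nat.dvd_prime Nat.prime_two).mp hg with h | h <;> rw [h] at ht hg' <;> omega
  -- main induction
  have main : ∀ k, 1 ≤ k → k ≤ t - 1 →
      aSeq a k * alph a k = alph a (k + 1) ∧ alph a k ≠ 0 := by
    intro k
    induction k with
    | zero => omega
    | succ k ih =>
      intro _ hk
      by_cases hk1 : k = 0
      · subst hk1
        constructor
        · show (a - (aSeq a 0)⁻¹) * alph a 1 = alph a 2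
          simp [aSeq, alph]
        · exact one_ne_zero
      · obtain ⟨h1, h2⟩ := ih (by omega) (by omega)
        have hk1ne : alph a (k + 1) ≠ 0 := by
          rw [Ne, hzero, htord]
          intro hdvd
          have := Nat.le_of_dvd (by omega) hdvd
          omega
        refine ⟨?_, hk1ne⟩
        show (a - (aSeq a k)⁻¹) * alph a (k + 1) = alph a (k + 2)
        have haSk : aSeq a k = alph a (k + 1) / alph a k := by
          rw [eq_div_iff h2]
          exact h1
        rw [haSk]
        have hrec : alph a (k + 2) = a * alph a (k + 1) - alph a k := rfl
        rw [hrec]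
        field_simp
  obtain ⟨h1, h2⟩ := main (t - 1) (by omega) le_rfl
  have ht0 : alph a t = 0 := (hzero t).mpr (by rw [htord])
  have htt : t - 1 + 1 = t := by omega
  rw [htt, ht0] at h1
  exact (mul_eq_zero.mp h1).resolve_right h2

end
end

section
/- Let 1 ≤ k ≤ t−2, and suppose that in PSL₂(F) one has (u(a)·s)^k = u(c)·s·u(x)·h(y) and (u(a)·s)^{k+1} = u(c')·s·u(x')·h(y') for some c, c', x, x' ∈ F and y, y' ∈ F\{0}, with c ≠ 0. Then c' = a − c⁻¹. Likewise, if q is odd, b ∈ F, and (u(a)·s)^ℓ·(u(b)·s·u(−b)) = u(d)·s·u(x)·h(y) and (u(a)·s)^{ℓ+1}·(u(b)·s·u(−b)) = u(d')·s·u(x')·h(y') with d ≠ 0, then d' = a − d⁻¹. -/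
open Polynomial

noncomputable section

private lemma quotEq {F : Type*} [Field F] {G H : SL2 F}
    (h : (QuotientGroup.mk G : PSL2 F) = QuotientGroup.mk H) :
    ∃ r : F, r ≠ 0 ∧ (H : Matrix (Fin 2) (Fin 2) F) = r • (G : Matrix (Fin 2) (Fin 2) F) := by
  rw [QuotientGroup.eq] at h
  obtain ⟨r, hr2, hr⟩ := Matrix.SpecialLinearGroup.mem_center_iff.mp h
  refine ⟨r, fun h0 => by simp [h0] at hr2, ?_⟩
  have : (H : Matrix (Fin 2) (Fin 2) F) = (G : Matrix (Fin 2) (Fin 2) F) * ((G⁻¹ * H : SL2 F) : Matrix (Fin 2) (Fin 2) F) := by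
    rw [← Matrix.SpecialLinearGroup.coe_mul, mul_inv_cancel_left]
  rw [this, ← hr]
  ext i j
  simp [Matrix.scalar_apply, Matrix.mul_diagonal, mul_comm]

private lemma key {F : Type*} [Field F] (a c c' x x' y y' : F) (hy : y ≠ 0) (hy' : y' ≠ 0)
    (hc : c ≠ 0)
    (h : (uu a * ss) * (uu c * ss * uu x * hh y hy) = uu c' * ss * uu x' * hh y' hy') :
    c' = a - c⁻¹ := by
  unfold uu ss hh at h
  change (QuotientGroup.mk ((@id (SL2 F) ⟨!![1, a; 0, 1], by simp [Matrix.det_fin_two_of]⟩) * (@id (SL2 F) ⟨!![0, 1; -1, 0], by simp [Matrix.det_fin_two_of]⟩) * ((@id (SL2 F) ⟨!![1, c; 0, 1], by simp [Matrix.det_fin_two_of]⟩) * (@id (SL2 F) ⟨!![0, 1; -1, 0], by simp [Matrix.det_fin_two_of]⟩) * (@id (SL2 F) ⟨!![1, x; 0, 1], by simp [Matrix.det_fin_two_of]⟩) * (@id (SL2 F) ⟨!![y, 0; 0, y⁻¹], by simp [Matrix.det_fin_two_of, mul_inv_cancel₀ hy]⟩))) : PSL2 F) = QuotientGroup.mk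 ((@id (SL2 F) ⟨!![1, c'; 0, 1], by simp [Matrix.det_fin_two_of]⟩) * (@id (SL2 F) ⟨!![0, 1; -1, 0], by simp [Matrix.det_fin_two_of]⟩) * (@id (SL2 F) ⟨!![1, x'; 0, 1], by simp [Matrix.det_fin_two_of]⟩) * (@id (SL2 F) ⟨!![y', 0; 0, y'⁻¹], by simp [Matrix.det_fin_two_of, mul_inv_cancel₀ hy']⟩)) at h
  obtain ⟨r, hrne, hm⟩ := quotEq h
  simp only [Matrix.SpecialLinearGroup.coe_mul, Matrix.mul_fin_two] at hm
  simp only [id] at hm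
  have h10 := congrFun (congrFun hm 1) 0
  have h00 := congrFun (congrFun hm 0) 0
  simp [Matrix.smul_of] at h10 h00
  have hcy : c' * (r * (c * y)) = r * (a * (c * y) + -y) := by
    rw [← h10]; linear_combination h00
  have hry : r * y ≠ 0 := mul_ne_zero hrne hy
  have h3 := mul_right_cancel₀ hry (show c' * c * (r * y) = (a * c - 1) * (r * y) by
    linear_combination hcy)
  field_simp
  linear_combination h3


theorem stmt8 (F : Type*) [Field F] [Fintype F] (q : ℕ) (hq : Fintype.card F = q)
    (a : F) (hirr : Irreducible (X ^ 2 + C a * X + 1 : F[X]))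
    (ω : AlgebraicClosure F) (hroot : aeval ω (X ^ 2 + C a * X + 1 : F[X]) = 0)
    (hord : orderOf ω = q + 1) (t : ℕ) (ht : t = (q + 1) / Nat.gcd 2 (q + 1)) :
    (∀ (k : ℕ) (c c' x x' y y' : F) (hy : y ≠ 0) (hy' : y' ≠ 0),
      1 ≤ k → k ≤ t - 2 → c ≠ 0 →
      (uu a * ss : PSL2 F) ^ k = uu c * ss * uu x * hh y hy →
      (uu a * ss : PSL2 F) ^ (k + 1) = uu c' * ss * uu x' * hh y' hy' →
      c' = a - c⁻¹) ∧
    (Odd q → ∀ (b : F) (l : ℕ) (d d' x x' y y' : F) (hy : y ≠ 0) (hy' : y' ≠ 0),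
      d ≠ 0 →
      (uu a * ss : PSL2 F) ^ l * (uu b * ss * uu (-b)) = uu d * ss * uu x * hh y hy →
      (uu a * ss : PSL2 F) ^ (l + 1) * (uu b * ss * uu (-b)) = uu d' * ss * uu x' * hh y' hy' →
      d' = a - d⁻¹) := by
  constructor
  · intro k c c' x x' y y' hy hy' _ _ hc h1 h2
    refine key a c c' x x' y y' hy hy' hc ?_
    rw [← h1, ← pow_succ']
    exact h2
  · intro _ b l d d' x x' y y' hy hy' hd h1 h2
    refine key a d d' x x' y y' hy hy' hd ?_
    rw [← h1, ← mul_assoc, ← pow_succ']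
    exact h2

end
end

section
/- For every 1 ≤ k ≤ t−1 one has a_k = α_k(a)·α_{k−1}(a)⁻¹ and α_k(a) = a₁·a₂⋯a_k (the product of the first k terms of the sequence (a_k)). -/
open Polynomial

noncomputable section

theorem stmt9 (F : Type*) [Field F] [Fintype F] (q : ℕ) (hq : Fintype.card F = q)
    (a : F) (hirr : Irreducible (X ^ 2 + C a * X + 1 : F[X]))
    (ω : AlgebraicClosure F) (hroot : aeval ω (X ^ 2 + C a * X + 1 : F[X]) = 0)
    (hord : orderOf ω = q + 1) (t : ℕ) (ht : t = (q + 1) / Nat.gcd 2 (q + 1)) :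
    ∀ k : ℕ, 1 ≤ k → k ≤ t - 1 →
      aSeq a k = alph a (k + 1) * (alph a k)⁻¹ ∧
      alph a (k + 1) = ∏ i ∈ Finset.Icc 1 k, aSeq a i := by
  -- setup in the algebraic closure
  have hq2 : 2 ≤ q := hq ▸ Fintype.one_lt_card
  have hroot' : ω ^ 2 + algebraMap F (AlgebraicClosure F) a * ω + 1 = 0 := by
    simpa using hroot
  have hω0 : ω ≠ 0 := by
    intro h
    rw [h] at hroot'
    simp at hroot'
  set s : AlgebraicClosure F := -ω with hs
  have hs0 : s ≠ 0 := neg_ne_zero.mpr hω0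
  have hsu : s * s⁻¹ = 1 := mul_inv_cancel₀ hs0
  have hsinv : s⁻¹ = -ω⁻¹ := by rw [hs, inv_neg]
  have ha : algebraMap F (AlgebraicClosure F) a = s + s⁻¹ := by
    rw [hsinv, hs]
    field_simp
    linear_combination hroot'
  have key : ∀ n : ℕ, (s - s⁻¹) * algebraMap F (AlgebraicClosure F) (alph a n)
      = s ^ n - (s⁻¹) ^ n := by
    intro n
    induction n using Nat.twoStepInduction with
    | zero => simp [alph]
    | one => simp [alph]
    | more n ih2 ih1 =>
      have hrec : alph a (n + 2) = a * alph a (n + 1) - alph a n := rfl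
      rw [hrec, map_sub, map_mul, ha]
      linear_combination (s + s⁻¹) * ih1 - ih2 + (s ^ n - (s⁻¹) ^ n) * hsu
  have hne : s - s⁻¹ ≠ 0 := by
    intro h
    have h2 : s ^ 2 = 1 := by
      have hss : s = s⁻¹ := by linear_combination h
      calc s ^ 2 = s * s := sq s
        _ = s * s⁻¹ := by nth_rewrite 2 [hss]; rfl
        _ = 1 := hsu
    have hω2 : ω ^ 2 = 1 := by
      have hx : s ^ 2 = ω ^ 2 := by rw [hs]; ring
      rw [← hx, h2]
    have hd := orderOf_dvd_of_pow_eq_one hω2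
    rw [hord] at hd
    have := Nat.le_of_dvd (by norm_num) hd
    omega
  -- nonvanishing of alph a n for 1 ≤ n < t
  have hnz : ∀ n : ℕ, 1 ≤ n → n < t → alph a n ≠ 0 := by
    intro n h1 h2 h0
    have hk := key n
    rw [h0, map_zero, mul_zero] at hk
    have hsn : s ^ n = (s⁻¹) ^ n := by linear_combination -hk
    have hs2n : s ^ (2 * n) = 1 := by
      calc s ^ (2 * n) = s ^ n * s ^ n := by rw [two_mul, pow_add]
        _ = (s⁻¹) ^ n * s ^ n := by rw [← hsn]
        _ = (s⁻¹ * s) ^ n := (mul_pow _ _ _).symm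
        _ = 1 := by rw [inv_mul_cancel₀ hs0, one_pow]
    have hω2n : ω ^ (2 * n) = 1 := by
      have hx : s ^ (2 * n) = ω ^ (2 * n) := by
        rw [hs, mul_comm 2 n, pow_mul, pow_mul, ← pow_mul, ← pow_mul,
          mul_comm n 2, pow_mul, pow_mul, neg_sq]
      rw [← hx, hs2n]
    have hdvd : (q + 1) ∣ 2 * n := hord ▸ orderOf_dvd_of_pow_eq_one hω2n
    obtain ⟨c, hc⟩ := hdvd
    by_cases h2d : 2 ∣ (q + 1)
    · have hg : Nat.gcd 2 (q + 1) = 2 := Nat.gcd_eq_left h2d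
      rw [hg] at ht
      obtain ⟨m, hm⟩ := h2d
      have hclt : c < 1 := by
        have hlt : (q + 1) * c < (q + 1) * 1 := by rw [← hc]; omega
        exact Nat.lt_of_mul_lt_mul_left hlt
      interval_cases c <;> omega
    · have hg : Nat.gcd 2 (q + 1) = 1 := by
        have h' := Nat.gcd_dvd_left 2 (q + 1)
        have h'' := Nat.gcd_dvd_right 2 (q + 1)
        rcases (Nat.dvd_prime Nat.prime_two).mp h' with h | h
        · exact h
        · exact absurd (h ▸ h'') h2d
      rw [hg, Nat.div_one] at ht
      have hclt : c < 2 := by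
        have hlt : (q + 1) * c < (q + 1) * 2 := by rw [← hc]; omega
        exact Nat.lt_of_mul_lt_mul_left hlt
      interval_cases c <;> omega
  -- main induction
  intro k hk1 hk2
  induction k, hk1 using Nat.le_induction with
  | base =>
    refine ⟨?_, ?_⟩
    · simp [aSeq, alph]
    · simp [aSeq, alph]
  | succ k hk ih =>
    have hk2' : k ≤ t - 1 := by omega
    obtain ⟨ih1, ih2⟩ := ih hk2'
    have hnz1 : alph a k ≠ 0 := hnz k hk (by omega)
    have hnz2 : alph a (k + 1) ≠ 0 := hnz (k + 1) (by omega) (by omega)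
    have hrec : alph a (k + 2) = a * alph a (k + 1) - alph a k := rfl
    have hstep : aSeq a (k + 1) = alph a (k + 2) * (alph a (k + 1))⁻¹ := by
      show a - (aSeq a k)⁻¹ = _
      rw [ih1, hrec]
      field_simp
    refine ⟨hstep, ?_⟩
    rw [Finset.prod_Icc_succ_top (by omega : 1 ≤ k + 1), ← ih2, hstep]
    field_simp

end
end

section
/- Suppose q is odd. For every 0 ≤ ℓ ≤ t−1 one has b_ℓ = β_ℓ(a,b)·β_{ℓ−1}(a,b)⁻¹ and β_ℓ(a,b) = b₀·b₁⋯b_ℓ (the product of the terms b₀ through b_ℓ of the sequence (b_ℓ)). -/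
open Polynomial

noncomputable section

theorem stmt10 (F : Type*) [Field F] [Fintype F] (q : ℕ) (hq : Fintype.card F = q)
    (a : F) (hirr : Irreducible (X ^ 2 + C a * X + 1 : F[X]))
    (ω : AlgebraicClosure F) (hroot : aeval ω (X ^ 2 + C a * X + 1 : F[X]) = 0)
    (hord : orderOf ω = q + 1)
    (hqodd : Odd q) (t : ℕ) (ht : t = (q + 1) / Nat.gcd 2 (q + 1)) (b : F)
    (hb : ∀ k : ℕ, 1 ≤ k → k ≤ t - 1 → b ≠ aSeq a k) :
    ∀ l : ℕ, l ≤ t - 1 →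
      bSeq a b l = bet a b (l + 1) * (bet a b l)⁻¹ ∧
      bet a b (l + 1) = ∏ i ∈ Finset.range (l + 1), bSeq a b i := by
  classical
  -- basic numerology
  have hq2 : 2 ≤ q := hq ▸ Fintype.one_lt_card
  have hq3 : 3 ≤ q := by rcases hqodd with ⟨m, hm⟩; omega
  have ht2 : q + 1 = 2 * t := by
    rcases hqodd with ⟨m, hm⟩
    have hg : Nat.gcd 2 (q + 1) = 2 := Nat.gcd_eq_left ⟨m + 1, by omega⟩
    rw [hg] at ht; omega
  have htge : 2 ≤ t := by omega
  have hinj : Function.Injective (algebraMap F (AlgebraicClosure F)) :=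
    RingHom.injective _
  have hω0 : ω ≠ 0 := by
    intro h
    have h1 := pow_orderOf_eq_one ω
    rw [hord, h, zero_pow (by omega : q + 1 ≠ 0)] at h1
    exact zero_ne_one h1
  have hc : algebraMap F (AlgebraicClosure F) a * ω = -(ω ^ 2 + 1) := by
    have h1 : ω ^ 2 + algebraMap F (AlgebraicClosure F) a * ω + 1 = 0 := by
      have := hroot
      simpa [map_add, map_pow, map_mul, map_one] using this
    linear_combination h1
  have hω2 : ω ^ 2 ≠ 1 := by
    intro h
    have h1 := orderOf_dvd_of_pow_eq_one h
    rw [hord] at h1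
    have := Nat.le_of_dvd (by omega) h1
    omega
  have alph_rec : ∀ n : ℕ, alph a (n + 2) = a * alph a (n + 1) - alph a n := fun n => rfl
  have bet_succ : ∀ n : ℕ, bet a b (n + 1) = b * alph a (n + 1) - alph a n := fun n => rfl
  have bet_rec : ∀ n : ℕ, bet a b (n + 2) = a * bet a b (n + 1) - bet a b n := by
    intro n
    cases n with
    | zero =>
      show b * alph a 2 - alph a 1 = a * (b * alph a 1 - alph a 0) - 1
      simp [alph]; ring
    | succ m =>
      rw [bet_succ, bet_succ, bet_succ, alph_rec (m + 1), alph_rec m]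
      ring
  -- the key formula expressing alph via ω
  have key : ∀ n : ℕ, algebraMap F (AlgebraicClosure F) (alph a n) * (ω ^ 2 - 1) * ω ^ n
      = (-1 : AlgebraicClosure F) ^ (n + 1) * ((ω ^ n) ^ 2 - 1) * ω := by
    have H : ∀ n : ℕ,
        (algebraMap F (AlgebraicClosure F) (alph a n) * (ω ^ 2 - 1) * ω ^ n = (-1 : AlgebraicClosure F) ^ (n + 1) * ((ω ^ n) ^ 2 - 1) * ω) ∧
        (algebraMap F (AlgebraicClosure F) (alph a (n + 1)) * (ω ^ 2 - 1) * ω ^ (n + 1)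
          = (-1 : AlgebraicClosure F) ^ (n + 2) * ((ω ^ (n + 1)) ^ 2 - 1) * ω) := by
      intro n
      induction n with
      | zero =>
        constructor
        · simp [alph]
        · simp [alph]
      | succ m ih =>
        obtain ⟨h1, h2⟩ := ih
        refine ⟨h2, ?_⟩
        rw [alph_rec m, map_sub, map_mul]
        linear_combination (algebraMap F (AlgebraicClosure F) (alph a (m + 1)) * (ω ^ 2 - 1) * ω ^ (m + 1)) * hc
          + (-(ω ^ 2 + 1)) * h2 + (-(ω ^ 2)) * h1
    exact fun n => (H n).1
  have halph_zero : ∀ n : ℕ, alph a n = 0 ↔ t ∣ n := by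
    intro n
    constructor
    · intro h
      have k' : (-1 : AlgebraicClosure F) ^ (n + 1) * ((ω ^ n) ^ 2 - 1) * ω = 0 := by
        rw [← key n, h, map_zero]; ring
      rcases mul_eq_zero.mp k' with k'' | k''
      · rcases mul_eq_zero.mp k'' with k3 | k3
        · exact absurd k3 (pow_ne_zero _ (neg_ne_zero.mpr one_ne_zero))
        · have hpow : ω ^ (n * 2) = 1 := by rw [pow_mul]; linear_combination k3
          have hdvd := orderOf_dvd_of_pow_eq_one hpow
          rw [hord] at hdvd
          rcases hdvd with ⟨c, hc'⟩
          have h5 : n * 2 = t * c * 2 := by rw [hc', ht2]; ring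
          exact ⟨c, by omega⟩
      · exact absurd k'' hω0
    · intro ⟨c, hc'⟩
      have hpow : ω ^ (n * 2) = 1 := by
        have : ω ^ (q + 1) = 1 := by rw [← hord]; exact pow_orderOf_eq_one ω
        calc ω ^ (n * 2) = (ω ^ (q + 1)) ^ c := by
              rw [← pow_mul]; congr 1; rw [hc', ht2]; ring
          _ = 1 := by rw [this, one_pow]
      have hsq : (ω ^ n) ^ 2 = 1 := by rw [← pow_mul]; exact hpow
      have k := key n
      rw [hsq] at k
      simp only [sub_self, mul_zero, zero_mul] at k
      apply hinj
      rw [map_zero]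
      rcases mul_eq_zero.mp k with k'' | k''
      · rcases mul_eq_zero.mp k'' with k3 | k3
        · exact k3
        · exact absurd k3 (sub_ne_zero.mpr hω2)
      · exact absurd k'' (pow_ne_zero _ hω0)
  have hne : ∀ n : ℕ, 1 ≤ n → n ≤ t - 1 → alph a n ≠ 0 := by
    intro n h1 h2 h
    have := (halph_zero n).mp h
    have := Nat.le_of_dvd (by omega) this
    omega
  have halph_t : alph a t = 0 := (halph_zero t).mpr dvd_rfl
  -- ω ^ t = -1
  have hωt : ω ^ t = -1 := by
    have h1 : (ω ^ t) ^ 2 = 1 := by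
      rw [← pow_mul]
      have : ω ^ (q + 1) = 1 := by rw [← hord]; exact pow_orderOf_eq_one ω
      rw [show t * 2 = q + 1 by omega]; exact this
    have h2 : ω ^ t ≠ 1 := by
      intro h
      have := orderOf_dvd_of_pow_eq_one h
      rw [hord] at this
      have := Nat.le_of_dvd (by omega) this
      omega
    rcases mul_eq_zero.mp (show (ω ^ t - 1) * (ω ^ t + 1) = 0 by linear_combination h1)
      with h | h
    · exact absurd (by linear_combination h) h2
    · linear_combination h
  -- symmetry alph (t - n) = (-1)^t * alph n
  have hsym : ∀ n : ℕ, n ≤ t → alph a (t - n) = (-1 : F) ^ t * alph a n := by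
    intro n hn
    apply hinj
    rw [map_mul, map_pow, map_neg, map_one]
    have hX : ((ω ^ 2 - 1) * ω ^ n) ≠ 0 :=
      mul_ne_zero (sub_ne_zero.mpr hω2) (pow_ne_zero _ hω0)
    apply mul_right_cancel₀ hX
    have huv : ω ^ (t - n) * ω ^ n = -1 := by
      rw [← pow_add, Nat.sub_add_cancel hn, hωt]
    have hsgn : (-1 : AlgebraicClosure F) ^ (t - n) * (-1 : AlgebraicClosure F) ^ n = (-1 : AlgebraicClosure F) ^ t := by
      rw [← pow_add, Nat.sub_add_cancel hn]
    have hr2 : (-1 : AlgebraicClosure F) ^ n * (-1 : AlgebraicClosure F) ^ n = 1 := by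
      rw [← pow_add]; exact Even.neg_one_pow ⟨n, rfl⟩
    have e1 : algebraMap F (AlgebraicClosure F) (alph a (t - n)) * (ω ^ 2 - 1) * ω ^ n
        = -((-1 : AlgebraicClosure F) ^ (t - n)) * ((ω ^ n) ^ 2 - 1) * ω := by
      linear_combination (-(ω ^ n) ^ 2) * key (t - n)
        + (algebraMap F (AlgebraicClosure F) (alph a (t - n)) * (ω ^ 2 - 1) * ω ^ n
            + (-1 : AlgebraicClosure F) ^ (t - n) * ω * (ω ^ (t - n) * ω ^ n - 1)) * huv
    linear_combination e1 + (-((-1 : AlgebraicClosure F) ^ t)) * key n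
      + ((ω ^ n) ^ 2 - 1) * ω * ((-(-1 : AlgebraicClosure F) ^ n) * hsgn + (-1 : AlgebraicClosure F) ^ (t - n) * hr2)
  -- formula for aSeq
  have haS : ∀ k : ℕ, 1 ≤ k → k ≤ t - 1 → aSeq a k = alph a (k + 1) * (alph a k)⁻¹ := by
    intro k
    induction k with
    | zero => omega
    | succ m ih =>
      intro _ hk2
      cases m with
      | zero =>
        show a - (aSeq a 0)⁻¹ = alph a 2 * (alph a 1)⁻¹
        simp [aSeq, alph]
      | succ p =>
        have ihm := ih (by omega) (by omega)
        show a - (aSeq a (p + 1))⁻¹ = alph a (p + 1 + 2) * (alph a (p + 1 + 1))⁻¹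
        rw [ihm, mul_inv, inv_inv, alph_rec (p + 1)]
        have h1 : alph a (p + 1 + 1) ≠ 0 := hne _ (by omega) (by omega)
        field_simp
  -- bet does not vanish
  have hbet : ∀ l : ℕ, l ≤ t - 1 → bet a b (l + 1) ≠ 0 := by
    intro l hl hcon
    rw [bet_succ] at hcon
    by_cases hl' : l = t - 1
    · subst hl'
      rw [show t - 1 + 1 = t by omega, halph_t] at hcon
      have : alph a (t - 1) = 0 := by linear_combination -hcon
      exact hne (t - 1) (by omega) le_rfl this
    · have h1 : alph a (l + 1) ≠ 0 := hne _ (by omega) (by omega)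
      have hbval : b = alph a l * (alph a (l + 1))⁻¹ := by
        field_simp
        linear_combination hcon
      have e1 : alph a (t - (l + 1)) = (-1 : F) ^ t * alph a (l + 1) := hsym (l + 1) (by omega)
      have e2 : alph a (t - l) = (-1 : F) ^ t * alph a l := hsym l (by omega)
      apply hb (t - 1 - l) (by omega) (by omega)
      rw [haS (t - 1 - l) (by omega) (by omega), hbval,
        show t - 1 - l + 1 = t - l by omega, show t - 1 - l = t - (l + 1) by omega, e1, e2]
      rcases Nat.even_or_odd t with hpar | hpar
      · rw [hpar.neg_one_pow, one_mul, one_mul]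
      · rw [hpar.neg_one_pow, neg_one_mul, neg_one_mul, inv_neg]
        ring
  -- main induction
  intro l
  induction l with
  | zero =>
    intro _
    constructor
    · show b = bet a b 1 * (bet a b 0)⁻¹
      simp [bet, alph]
    · simp [bet, alph, bSeq]
  | succ m ih =>
    intro hm
    have hm' : m ≤ t - 1 := by omega
    obtain ⟨ih1, ih2⟩ := ih hm'
    have hb1 : bet a b (m + 1) ≠ 0 := hbet m hm'
    have h1 : bSeq a b (m + 1) = bet a b (m + 2) * (bet a b (m + 1))⁻¹ := by
      show a - (bSeq a b m)⁻¹ = _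
      rw [ih1, mul_inv, inv_inv, bet_rec]
      field_simp
    refine ⟨h1, ?_⟩
    rw [Finset.prod_range_succ, ← ih2, h1]
    field_simp


end
end

section
/- The sequence (a_k) satisfies a_k·a_{t−k−1} = 1 for all 1 ≤ k ≤ t−2, and a_k + a_{t−k} = a for all 1 ≤ k ≤ t−1. -/
open Polynomial

noncomputable section

theorem stmt11 (F : Type*) [Field F] [Fintype F] (q : ℕ) (hq : Fintype.card F = q)
    (a : F) (hirr : Irreducible (X ^ 2 + C a * X + 1 : F[X]))
    (ω : AlgebraicClosure F) (hroot : aeval ω (X ^ 2 + C a * X + 1 : F[X]) = 0)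
    (hord : orderOf ω = q + 1) (t : ℕ) (ht : t = (q + 1) / Nat.gcd 2 (q + 1)) :
    (∀ k : ℕ, 1 ≤ k → k ≤ t - 2 → aSeq a k * aSeq a (t - k - 1) = 1) ∧
    (∀ k : ℕ, 1 ≤ k → k ≤ t - 1 → aSeq a k + aSeq a (t - k) = a) := by
  set φ := algebraMap F (AlgebraicClosure F) with hφ
  have hinj : Function.Injective φ := (algebraMap F (AlgebraicClosure F)).injective
  -- basic facts about ω
  have hroot' : ω ^ 2 + φ a * ω + 1 = 0 := by simpa using hroot
  have hω0 : ω ≠ 0 := by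
    intro h
    rw [h] at hroot'
    simp at hroot'
  have hωv : ω * ω⁻¹ = 1 := mul_inv_cancel₀ hω0
  have ha : φ a = -ω - ω⁻¹ := by
    apply mul_right_cancel₀ hω0
    linear_combination hroot' + hωv
  -- q ≥ 2
  have hq2 : 2 ≤ q := by
    have := Fintype.one_lt_card (α := F)
    omega
  have hω1 : ω ^ (q + 1) = 1 := by rw [← hord]; exact pow_orderOf_eq_one ω
  -- gcd case analysis
  have hg : Nat.gcd 2 (q + 1) = 1 ∨ Nat.gcd 2 (q + 1) = 2 :=
    (Nat.dvd_prime Nat.prime_two).mp (Nat.gcd_dvd_left 2 (q + 1))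
  have hdvd : (q + 1) ∣ 2 * t := by
    rcases hg with h | h
    · rw [ht, h, Nat.div_one]
      exact ⟨2, by ring⟩
    · have h2 : 2 ∣ q + 1 := by rw [← h]; exact Nat.gcd_dvd_right 2 (q + 1)
      rw [ht, h, Nat.mul_div_cancel' h2]
  have ht1 : 2 ≤ t := by
    rcases hg with h | h
    · rw [ht, h, Nat.div_one]; omega
    · have h2 : 2 ∣ q + 1 := by rw [← h]; exact Nat.gcd_dvd_right 2 (q + 1)
      rw [ht, h]
      omega
  have h2t : ω ^ (2 * t) = 1 := by
    obtain ⟨c, hc⟩ := hdvd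
    rw [hc, pow_mul, hω1, one_pow]
  -- ω - ω⁻¹ ≠ 0
  have hW : ω - ω⁻¹ ≠ 0 := by
    intro h
    have h1 : ω ^ 2 = 1 := by
      have : ω = ω⁻¹ := sub_eq_zero.mp h
      calc ω ^ 2 = ω * ω := sq ω
        _ = ω * ω⁻¹ := by rw [← this]
        _ = 1 := hωv
    have := orderOf_dvd_of_pow_eq_one h1
    rw [hord] at this
    have := Nat.le_of_dvd (by norm_num) this
    omega
  -- closed form
  have hclosed : ∀ n : ℕ, φ (alph a n) * (ω - ω⁻¹) = (-1) ^ (n + 1) * (ω ^ n - (ω⁻¹) ^ n) := by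
    have key : ∀ n : ℕ, (φ (alph a n) * (ω - ω⁻¹) = (-1) ^ (n + 1) * (ω ^ n - (ω⁻¹) ^ n)) ∧
        (φ (alph a (n + 1)) * (ω - ω⁻¹) = (-1) ^ (n + 2) * (ω ^ (n + 1) - (ω⁻¹) ^ (n + 1))) := by
      intro n
      induction n with
      | zero =>
        constructor
        · simp [alph]
        · simp [alph]
      | succ n ih =>
        refine ⟨ih.2, ?_⟩
        have hrec : alph a (n + 2) = a * alph a (n + 1) - alph a n := rfl
        rw [hrec, map_sub, map_mul, ha]
        linear_combination (-ω - ω⁻¹) * ih.2 - ih.1 + (-1 : AlgebraicClosure F) ^ n * ((ω⁻¹) ^ n - ω ^ n) * hωv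
    exact fun n => (key n).1
  -- nonvanishing
  have hnz : ∀ n : ℕ, 1 ≤ n → n ≤ t - 1 → alph a n ≠ 0 := by
    intro n hn1 hn2 h0
    have hc := hclosed n
    rw [h0, map_zero, zero_mul] at hc
    have hsgn : ((-1 : AlgebraicClosure F)) ^ (n + 1) ≠ 0 := pow_ne_zero _ (by norm_num)
    have hxy : ω ^ n = (ω⁻¹) ^ n := by
      rcases mul_eq_zero.mp hc.symm with h | h
      · exact absurd h hsgn
      · exact sub_eq_zero.mp h
    have h2n : ω ^ (2 * n) = 1 := by
      rw [two_mul, pow_add]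
      nth_rewrite 2 [hxy]
      rw [← mul_pow, hωv, one_pow]
    have hdvd2n : (q + 1) ∣ 2 * n := by
      have := orderOf_dvd_of_pow_eq_one h2n
      rwa [hord] at this
    rcases hg with h | h
    · have hco : Nat.Coprime (q + 1) 2 := by
        rw [Nat.coprime_comm]; exact h
      have := (Nat.Coprime.dvd_of_dvd_mul_left hco hdvd2n)
      have := Nat.le_of_dvd (by omega) this
      rw [ht, h, Nat.div_one] at hn2
      omega
    · have h2 : 2 ∣ q + 1 := by rw [← h]; exact Nat.gcd_dvd_right 2 (q + 1)
      have h2t' : 2 * t = q + 1 := by rw [ht, h, Nat.mul_div_cancel' h2]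
      have := Nat.le_of_dvd (by omega) hdvd2n
      omega
  -- key identity
  have hKey : ∀ m n : ℕ, m + n = t - 1 →
      alph a (m + 1) * alph a (n + 1) = alph a m * alph a n := by
    intro m n hmn
    have e : ω ^ (m + n) * ω ^ (m + n + 2) = 1 := by
      rw [← pow_add]
      have hh : m + n + (m + n + 2) = 2 * t := by omega
      rw [hh, h2t]
    have evv : ω ^ (m + n) * (ω⁻¹) ^ (m + n) = 1 := by
      rw [← mul_pow, hωv, one_pow]
    have hωp : ω ^ (m + n) ≠ 0 := pow_ne_zero _ hω0
    have hvp : (ω⁻¹) ^ (m + n) ≠ 0 := pow_ne_zero _ (inv_ne_zero hω0)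
    have hA : ω ^ (m + n + 2) = (ω⁻¹) ^ (m + n) := mul_left_cancel₀ hωp (e.trans evv.symm)
    have hB : (ω⁻¹) ^ (m + n + 2) = ω ^ (m + n) := by
      have e2 : (ω⁻¹) ^ (m + n) * (ω⁻¹) ^ (m + n + 2) = 1 := by
        rw [← pow_add]
        have hh : m + n + (m + n + 2) = 2 * t := by omega
        rw [hh, inv_pow, h2t, inv_one]
      have evv2 : (ω⁻¹) ^ (m + n) * ω ^ (m + n) = 1 := by
        rw [← mul_pow, inv_mul_cancel₀ hω0, one_pow]
      exact mul_left_cancel₀ hvp (e2.trans evv2.symm)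
    have hx : (ω ^ (m + 1) - (ω⁻¹) ^ (m + 1)) * (ω ^ (n + 1) - (ω⁻¹) ^ (n + 1)) =
        (ω ^ m - (ω⁻¹) ^ m) * (ω ^ n - (ω⁻¹) ^ n) := by
      linear_combination hA + hB - (ω ^ m * (ω⁻¹) ^ n + ω ^ n * (ω⁻¹) ^ m) * hωv
    apply hinj
    rw [map_mul, map_mul]
    apply mul_right_cancel₀ (mul_ne_zero hW hW)
    linear_combination (φ (alph a (n + 1)) * (ω - ω⁻¹)) * hclosed (m + 1) +
      ((-1 : AlgebraicClosure F) ^ (m + 2) * (ω ^ (m + 1) - (ω⁻¹) ^ (m + 1))) * hclosed (n + 1) -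
      (φ (alph a n) * (ω - ω⁻¹)) * hclosed m -
      ((-1 : AlgebraicClosure F) ^ (m + 1) * (ω ^ m - (ω⁻¹) ^ m)) * hclosed n +
      (-1 : AlgebraicClosure F) ^ (m + n) * hx
  -- aSeq formula
  have haSeq : ∀ k : ℕ, 1 ≤ k → k ≤ t - 1 → aSeq a k * alph a k = alph a (k + 1) := by
    intro k
    induction k with
    | zero => omega
    | succ n ih =>
      intro _ hk
      rcases Nat.eq_zero_or_pos n with h | h
      · subst h
        show (a - (aSeq a 0)⁻¹) * alph a 1 = alph a 2
        simp [aSeq, alph]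
      · have hn : n ≤ t - 1 := by omega
        have hprev := ih h hn
        have hαn : alph a n ≠ 0 := hnz n h hn
        have hαn1 : alph a (n + 1) ≠ 0 := hnz (n + 1) (by omega) (by omega)
        have ha0 : aSeq a n ≠ 0 := by
          intro h0
          rw [h0, zero_mul] at hprev
          exact hαn1 hprev.symm
        show (a - (aSeq a n)⁻¹) * alph a (n + 1) = alph a (n + 2)
        have h1 : (aSeq a n)⁻¹ * alph a (n + 1) = alph a n := by
          rw [← hprev, inv_mul_cancel_left₀ ha0]
        have hrec : alph a (n + 2) = a * alph a (n + 1) - alph a n := rfl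
        rw [sub_mul, h1, hrec]
  constructor
  · intro k hk1 hk2
    set j := t - k - 1 with hj
    have hj1 : 1 ≤ j := by omega
    have hj2 : j ≤ t - 1 := by omega
    have e1 := haSeq k hk1 (by omega)
    have e2 := haSeq j hj1 hj2
    have h := hKey k j (by omega)
    have nzk : alph a k ≠ 0 := hnz k hk1 (by omega)
    have nzj : alph a j ≠ 0 := hnz j hj1 hj2
    apply mul_right_cancel₀ (mul_ne_zero nzk nzj)
    linear_combination (aSeq a j * alph a j) * e1 + alph a (k + 1) * e2 + h
  · intro k hk1 hk2
    have hj1 : 1 ≤ t - k := by omega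
    obtain ⟨n, hn⟩ : ∃ n, t - k = n + 1 := ⟨t - k - 1, by omega⟩
    rw [hn]
    have e1 := haSeq k hk1 hk2
    have e2 := haSeq (n + 1) (by omega) (by omega)
    have h := hKey k n (by omega)
    have nzk : alph a k ≠ 0 := hnz k hk1 hk2
    have nzj : alph a (n + 1) ≠ 0 := hnz (n + 1) (by omega) (by omega)
    have hrec : alph a (n + 2) = a * alph a (n + 1) - alph a n := rfl
    apply mul_right_cancel₀ (mul_ne_zero nzk nzj)
    linear_combination alph a (n + 1) * e1 + alph a k * e2 + h + alph a k * hrec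

end
end

section
/- The following hold for the sequence (a_k): (1) if F has characteristic 2, then a_{q/2} = 1; (2) if F has odd characteristic and 4 divides q−1, then a_{(q−1)/4} = 1 or a_{(q−1)/4} = −1; (3) if F has odd characteristic and 4 divides q+1, then a_{(q+1)/4} = a/2. -/
open Polynomial

noncomputable section

theorem stmt12 (F : Type*) [Field F] [Fintype F] (q : ℕ) (hq : Fintype.card F = q)
    (a : F) (hirr : Irreducible (X ^ 2 + C a * X + 1 : F[X]))
    (ω : AlgebraicClosure F) (hroot : aeval ω (X ^ 2 + C a * X + 1 : F[X]) = 0)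
    (hord : orderOf ω = q + 1) (t : ℕ) (ht : t = (q + 1) / Nat.gcd 2 (q + 1)) :
    (ringChar F = 2 → aSeq a (q / 2) = 1) ∧
    (ringChar F ≠ 2 → 4 ∣ q - 1 →
      aSeq a ((q - 1) / 4) = 1 ∨ aSeq a ((q - 1) / 4) = -1) ∧
    (ringChar F ≠ 2 → 4 ∣ q + 1 → aSeq a ((q + 1) / 4) = a / 2) := by
  have hq2 : 2 ≤ q := hq ▸ Fintype.one_lt_card
  set A := (algebraMap F (AlgebraicClosure F)) a with hAdef
  have hω : ω ^ 2 + A * ω + 1 = 0 := by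
    simpa using hroot
  have hω0 : ω ≠ 0 := by
    rintro rfl
    simp at hω
  have hqpow : ω ^ (q + 1) = 1 := hord ▸ pow_orderOf_eq_one ω
  have hsq : ω ^ 2 ≠ 1 := by
    intro h
    have := Nat.le_of_dvd two_pos (hord ▸ orderOf_dvd_of_pow_eq_one h)
    omega
  -- closed form for alph
  have key2 : ∀ n : ℕ,
      ((algebraMap F (AlgebraicClosure F)) (alph a n) * ((ω ^ 2 - 1) * ω ^ n)
        = (-1 : AlgebraicClosure F) ^ (n + 1) * ((ω ^ (2 * n) - 1) * ω)) ∧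
      ((algebraMap F (AlgebraicClosure F)) (alph a (n + 1)) * ((ω ^ 2 - 1) * ω ^ (n + 1))
        = (-1 : AlgebraicClosure F) ^ (n + 2) * ((ω ^ (2 * (n + 1)) - 1) * ω)) := by
    intro n
    induction n with
    | zero =>
      constructor
      · simp [alph]
      · simp only [alph, map_one, one_mul]
        ring
    | succ m ih =>
      refine ⟨ih.2, ?_⟩
      have h1 := ih.1
      have h2 := ih.2
      rw [show alph a (m + 2) = a * alph a (m + 1) - alph a m from rfl, map_sub, map_mul, ← hAdef]
      linear_combination (A * ω) * h2 - ω ^ 2 * h1 + (-1 : AlgebraicClosure F) ^ m * ω * (ω ^ (2 * m + 2) - 1) * hω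
  have key := fun n => (key2 n).1
  -- nonvanishing of alph
  have halphne : ∀ j, 1 ≤ j → 2 * j ≤ q → alph a j ≠ 0 := by
    intro j hj1 hjq h0
    have hk := key j
    rw [h0, map_zero, zero_mul] at hk
    have h1 : (ω ^ (2 * j) - 1) * ω = 0 := by
      rcases mul_eq_zero.mp hk.symm with h | h
      · exact absurd h (pow_ne_zero _ (neg_ne_zero.mpr one_ne_zero))
      · exact h
    rcases mul_eq_zero.mp h1 with h | h
    · have hone : ω ^ (2 * j) = 1 := sub_eq_zero.mp h
      have := Nat.le_of_dvd (by omega) (hord ▸ orderOf_dvd_of_pow_eq_one hone)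
      omega
    · exact hω0 h
  -- aSeq in terms of alph
  have haseq : ∀ m, (∀ j, 1 ≤ j → j ≤ m + 1 → alph a j ≠ 0) →
      aSeq a (m + 1) * alph a (m + 1) = alph a (m + 2) := by
    intro m
    induction m with
    | zero =>
      intro _
      simp [aSeq, alph]
    | succ n ih =>
      intro h
      have hih := ih (fun j hj1 hj2 => h j hj1 (by omega))
      have hne1 : alph a (n + 1) ≠ 0 := h (n + 1) (by omega) (by omega)
      have hne2 : alph a (n + 2) ≠ 0 := h (n + 2) (by omega) le_rfl
      have hs : aSeq a (n + 1) = alph a (n + 2) / alph a (n + 1) :=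
        eq_div_of_mul_eq hne1 hih
      rw [show aSeq a (n + 2) = a - (aSeq a (n + 1))⁻¹ from rfl, hs,
        show alph a (n + 3) = a * alph a (n + 2) - alph a (n + 1) from rfl]
      field_simp
  have hc : ∀ m : ℕ, (ω ^ 2 - 1) * ω ^ (m + 2) ≠ 0 := fun m =>
    mul_ne_zero (sub_ne_zero.mpr hsq) (pow_ne_zero _ hω0)
  refine ⟨?_, ?_, ?_⟩
  · -- char 2 case
    intro hchar
    have h2 : CharP F 2 := hchar ▸ ringChar.charP F
    obtain ⟨n, hp, hcard⟩ := FiniteField.card F 2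
    have h2q : 2 ∣ q := by
      rw [← hq, hcard]
      exact dvd_pow_self 2 n.pos.ne'
    have hk : 2 * (q / 2) = q := Nat.mul_div_cancel' h2q
    obtain ⟨m, hm⟩ : ∃ m, q / 2 = m + 1 := ⟨q / 2 - 1, by omega⟩
    have hmq : 2 * m + 2 = q := by omega
    have hE : ω ^ (2 * m + 3) = 1 := by
      rw [← hqpow]; congr 1; omega
    have hne1 : alph a (m + 1) ≠ 0 := halphne (m + 1) (by omega) (by omega)
    have hmul := haseq m (fun j hj1 hj2 => halphne j hj1 (by omega))
    have heq : alph a (m + 2) = alph a (m + 1) := by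
      apply (algebraMap F (AlgebraicClosure F)).injective
      apply mul_right_cancel₀ (hc m)
      have h2' := key (m + 2)
      have h1' := key (m + 1)
      linear_combination h2' - ω * h1' - (-1 : AlgebraicClosure F) ^ m * (ω ^ 2 + ω) * hE
    rw [hm]
    exact mul_right_cancel₀ hne1 (by rw [hmul, heq, one_mul])
  · -- 4 ∣ q - 1 case
    intro hchar hdvd
    right
    have hk : 4 * ((q - 1) / 4) = q - 1 := Nat.mul_div_cancel' hdvd
    obtain ⟨m, hm⟩ : ∃ m, (q - 1) / 4 = m + 1 := ⟨(q - 1) / 4 - 1, by omega⟩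
    have hmq : q = 4 * m + 5 := by omega
    have hsqE : (ω ^ (2 * m + 3)) ^ 2 = 1 := by
      rw [← pow_mul, ← hqpow]; congr 1; omega
    have hneE : ω ^ (2 * m + 3) ≠ 1 := by
      intro h
      have := Nat.le_of_dvd (by omega) (hord ▸ orderOf_dvd_of_pow_eq_one h)
      omega
    have hE : ω ^ (2 * m + 3) = -1 := by
      have hz : (ω ^ (2 * m + 3) - 1) * (ω ^ (2 * m + 3) + 1) = 0 := by
        linear_combination hsqE
      rcases mul_eq_zero.mp hz with h | h
      · exact absurd (sub_eq_zero.mp h) hneE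
      · exact eq_neg_of_add_eq_zero_left h
    have hne1 : alph a (m + 1) ≠ 0 := halphne (m + 1) (by omega) (by omega)
    have hmul := haseq m (fun j hj1 hj2 => halphne j hj1 (by omega))
    have heq : alph a (m + 2) = -alph a (m + 1) := by
      apply (algebraMap F (AlgebraicClosure F)).injective
      rw [map_neg]
      apply mul_right_cancel₀ (hc m)
      have h2' := key (m + 2)
      have h1' := key (m + 1)
      linear_combination h2' + ω * h1' - (-1 : AlgebraicClosure F) ^ m * (ω ^ 2 - ω) * hE
    rw [hm]
    refine mul_right_cancel₀ hne1 ?_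
    rw [hmul, heq]; ring
  · -- 4 ∣ q + 1 case
    intro hchar hdvd
    have h2ne : (2 : F) ≠ 0 := Ring.two_ne_zero hchar
    have hk : 4 * ((q + 1) / 4) = q + 1 := Nat.mul_div_cancel' hdvd
    obtain ⟨m, hm⟩ : ∃ m, (q + 1) / 4 = m + 1 := ⟨(q + 1) / 4 - 1, by omega⟩
    have hmq : q = 4 * m + 3 := by omega
    have hsqE : (ω ^ (2 * m + 2)) ^ 2 = 1 := by
      rw [← pow_mul, ← hqpow]; congr 1; omega
    have hneE : ω ^ (2 * m + 2) ≠ 1 := by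
      intro h
      have := Nat.le_of_dvd (by omega) (hord ▸ orderOf_dvd_of_pow_eq_one h)
      omega
    have hE : ω ^ (2 * m + 2) = -1 := by
      have hz : (ω ^ (2 * m + 2) - 1) * (ω ^ (2 * m + 2) + 1) = 0 := by
        linear_combination hsqE
      rcases mul_eq_zero.mp hz with h | h
      · exact absurd (sub_eq_zero.mp h) hneE
      · exact eq_neg_of_add_eq_zero_left h
    have hne1 : alph a (m + 1) ≠ 0 := halphne (m + 1) (by omega) (by omega)
    have hmul := haseq m (fun j hj1 hj2 => halphne j hj1 (by omega))
    have heq : 2 * alph a (m + 2) = a * alph a (m + 1) := by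
      apply (algebraMap F (AlgebraicClosure F)).injective
      rw [map_mul, map_mul, map_ofNat, ← hAdef]
      apply mul_right_cancel₀ (hc m)
      have h2' := key (m + 2)
      have h1' := key (m + 1)
      linear_combination 2 * h2' - A * ω * h1' - (-1 : AlgebraicClosure F) ^ m * (ω ^ 3 - ω) * hE
        - (-1 : AlgebraicClosure F) ^ m * ω * (ω ^ (2 * m + 2) - 1) * hω
    rw [hm]
    rw [eq_div_of_mul_eq hne1 hmul, div_eq_div_iff hne1 h2ne]
    linear_combination heq


end
end

section
/- For every 1 ≤ ℓ < k ≤ t−1 one has a_k = a_ℓ − [(a₁·a₂⋯a_{ℓ−1})·(a_{k−ℓ}⋯a_{k−2}·a_{k−1})]⁻¹, where the first product runs over a_i for 1 ≤ i ≤ ℓ−1 and the second over a_i for k−ℓ ≤ i ≤ k−1. In particular, a_k = a_{k−1} − [a₁²·a₂²⋯a_{k−2}²·a_{k−1}]⁻¹. -/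
open Polynomial

noncomputable section

lemma alph_ss' {F : Type*} [Field F] (a : F) (n : ℕ) :
    alph a (n + 2) = a * alph a (n + 1) - alph a n := rfl

/-- the Catalan-type identity for the `alph` sequence. -/
lemma alphA' {F : Type*} [Field F] (a : F) (m : ℕ) :
    ∀ l, alph a (l + 1) * alph a (l + m) - alph a l * alph a (l + m + 1) = alph a m := by
  intro l
  induction l with
  | zero => simp [alph]
  | succ l ih =>
      have e2 : l + 1 + m = l + m + 1 := by ring
      rw [show l + 1 + 1 = l + 2 from rfl, e2, show l + m + 1 + 1 = l + m + 2 from rfl,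
        alph_ss', alph_ss']
      linear_combination ih

theorem stmt13 (F : Type*) [Field F] [Fintype F] (q : ℕ) (hq : Fintype.card F = q)
    (a : F) (hirr : Irreducible (X ^ 2 + C a * X + 1 : F[X]))
    (ω : AlgebraicClosure F) (hroot : aeval ω (X ^ 2 + C a * X + 1 : F[X]) = 0)
    (hord : orderOf ω = q + 1) (t : ℕ) (ht : t = (q + 1) / Nat.gcd 2 (q + 1)) :
    (∀ l k : ℕ, 1 ≤ l → l < k → k ≤ t - 1 →
      aSeq a k = aSeq a l -
        ((∏ i ∈ Finset.Icc 1 (l - 1), aSeq a i) *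
          ∏ i ∈ Finset.Icc (k - l) (k - 1), aSeq a i)⁻¹) ∧
    (∀ k : ℕ, 2 ≤ k → k ≤ t - 1 →
      aSeq a k = aSeq a (k - 1) -
        ((∏ i ∈ Finset.Icc 1 (k - 2), (aSeq a i) ^ 2) * aSeq a (k - 1))⁻¹) := by
  -- nonvanishing of `alph a n` for `1 ≤ n ≤ t - 1`
  have Halph : ∀ n : ℕ, 1 ≤ n → n ≤ t - 1 → alph a n ≠ 0 := by
    have hroot' : ω ^ 2 + algebraMap F (AlgebraicClosure F) a * ω + 1 = 0 := by
      simpa using hroot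
    have hω0 : ω ≠ 0 := by
      intro h
      rw [h] at hroot'
      simp at hroot'
    obtain ⟨x, hx⟩ : ∃ x : AlgebraicClosure F, x = -ω := ⟨-ω, rfl⟩
    have hx0 : x ≠ 0 := by rw [hx]; exact neg_ne_zero.mpr hω0
    have hxx : x * x⁻¹ = 1 := mul_inv_cancel₀ hx0
    have hxinv : x + x⁻¹ = algebraMap F (AlgebraicClosure F) a := by
      rw [hx, inv_neg]
      field_simp
      linear_combination -hroot'
    have L : ∀ n : ℕ, algebraMap F (AlgebraicClosure F) (alph a n) * (x - x⁻¹)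
        = x ^ n - (x⁻¹) ^ n := by
      intro n
      induction n using Nat.twoStepInduction with
      | zero => simp [alph]
      | one => simp [alph]
      | more n ih1 ih2 =>
          rw [alph_ss', map_sub, map_mul, ← hxinv]
          linear_combination (x + x⁻¹) * ih2 - ih1 + (x ^ n - (x⁻¹) ^ n) * hxx
    intro n hn1 hn2 hc
    have h0 : x ^ n - (x⁻¹) ^ n = 0 := by rw [← L n, hc]; simp
    have hxn : x ^ n = (x⁻¹) ^ n := sub_eq_zero.mp h0
    have hx2n : x ^ (2 * n) = 1 := by
      have h2 : (x * x⁻¹) ^ n = x ^ (2 * n) := by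
        rw [mul_pow, ← hxn, ← pow_add, two_mul]
      rw [← h2, hxx, one_pow]
    have hω2n : ω ^ (2 * n) = 1 := by
      have h3 : x ^ (2 * n) = ω ^ (2 * n) := by
        rw [hx]
        exact Even.neg_pow (even_two_mul n) ω
      rw [← h3, hx2n]
    have hdvd : q + 1 ∣ 2 * n := hord ▸ orderOf_dvd_of_pow_eq_one hω2n
    rcases Nat.even_or_odd (q + 1) with he | ho
    · have h2 : (2 : ℕ) ∣ q + 1 := he.two_dvd
      have hg : Nat.gcd 2 (q + 1) = 2 := Nat.gcd_eq_left h2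
      have h2t : 2 * t = q + 1 := by
        rw [ht, hg]
        exact Nat.mul_div_cancel' h2
      have hle : q + 1 ≤ 2 * n := Nat.le_of_dvd (by omega) hdvd
      omega
    · have hcop : Nat.Coprime (q + 1) 2 := Nat.coprime_two_right.mpr ho
      have hg : Nat.gcd 2 (q + 1) = 1 := by
        rw [Nat.gcd_comm]; exact hcop
      have hdn : q + 1 ∣ n := hcop.dvd_of_dvd_mul_left hdvd
      have hle : q + 1 ≤ n := Nat.le_of_dvd (by omega) hdn
      rw [ht, hg] at hn2
      omega
  -- `aSeq` as ratio of consecutive `alph`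
  have haseq : ∀ k : ℕ, 1 ≤ k → k ≤ t - 1 → aSeq a k = alph a (k + 1) / alph a k := by
    intro k
    induction k with
    | zero => intro h; omega
    | succ k ih =>
        intro h1 h2
        rcases Nat.eq_zero_or_pos k with rfl | hk
        · show a - (aSeq a 0)⁻¹ = _
          norm_num [aSeq, alph]
        · have hk2 : k ≤ t - 1 := by omega
          have hik := ih hk hk2
          have h1' : alph a (k + 1) ≠ 0 := Halph (k + 1) (by omega) h2
          show a - (aSeq a k)⁻¹ = _
          rw [hik, inv_div, alph_ss', sub_div, mul_div_cancel_right₀ _ h1']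
  -- telescoping products
  have hprod : ∀ m s : ℕ, 1 ≤ s → s ≤ t - 1 → m ≤ t - 1 → s ≤ m + 1 →
      ∏ i ∈ Finset.Icc s m, aSeq a i = alph a (m + 1) / alph a s := by
    intro m
    induction m with
    | zero =>
        intro s hs1 hs2 _ hsm
        have : s = 1 := by omega
        subst this
        rw [show Finset.Icc 1 0 = (∅ : Finset ℕ) from rfl]
        simp [alph]
    | succ m ih =>
        intro s hs1 hs2 hm hsm
        rcases Nat.lt_or_ge m (s) with hlt | hge
        · -- here s = m + 1 or s = m + 2
          rcases Nat.eq_or_lt_of_le hsm with heq | hlt2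
          · -- s = m + 2 : empty product
            rw [← heq]
            rw [Finset.Icc_eq_empty (by omega)]
            simp only [Finset.prod_empty]
            rw [heq, div_self (Halph (m + 2) (by omega) (heq ▸ hs2))]
          · -- s = m + 1
            have hs : s = m + 1 := by omega
            subst hs
            rw [Finset.Icc_self, Finset.prod_singleton]
            exact haseq (m + 1) hs1 hm
        · -- s ≤ m
          have hsm' : s ≤ m + 1 := by omega
          rw [Finset.prod_Icc_succ_top hsm', ih s hs1 hs2 (by omega) (by omega),
            haseq (m + 1) (by omega) hm]
          have hA : alph a s ≠ 0 := Halph s hs1 hs2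
          have hB : alph a (m + 1) ≠ 0 := Halph (m + 1) (by omega) hm
          field_simp
  have part1 : ∀ l k : ℕ, 1 ≤ l → l < k → k ≤ t - 1 →
      aSeq a k = aSeq a l -
        ((∏ i ∈ Finset.Icc 1 (l - 1), aSeq a i) *
          ∏ i ∈ Finset.Icc (k - l) (k - 1), aSeq a i)⁻¹ := by
    intro l k hl hlk hk
    obtain ⟨n, rfl⟩ : ∃ n, k = l + n + 1 := ⟨k - l - 1, by omega⟩
    rw [show l + n + 1 - l = n + 1 from by omega, show l + n + 1 - 1 = l + n from rfl]
    have hA : alph a l ≠ 0 := Halph l hl (by omega)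
    have hB : alph a (l + n + 1) ≠ 0 := Halph (l + n + 1) (by omega) hk
    have hC : alph a (n + 1) ≠ 0 := Halph (n + 1) (by omega) (by omega)
    have hP1 : ∏ i ∈ Finset.Icc 1 (l - 1), aSeq a i = alph a l := by
      rw [hprod (l - 1) 1 le_rfl (by omega) (by omega) (by omega),
        show l - 1 + 1 = l from by omega]
      simp [alph]
    have hP2 : ∏ i ∈ Finset.Icc (n + 1) (l + n), aSeq a i
        = alph a (l + n + 1) / alph a (n + 1) := by
      rw [hprod (l + n) (n + 1) (by omega) (by omega) (by omega) (by omega)]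
    have id1 := alphA' a (n + 1) l
    rw [show l + (n + 1) = l + n + 1 from by ring,
      show l + n + 1 + 1 = l + n + 2 from rfl] at id1
    rw [hP1, hP2, haseq (l + n + 1) (by omega) hk, haseq l hl (by omega)]
    rw [show l + n + 1 + 1 = l + n + 2 from rfl]
    field_simp
    linear_combination (-1 : F) * id1
  refine ⟨part1, ?_⟩
  intro k hk2 hk
  obtain ⟨m, rfl⟩ : ∃ m, k = m + 2 := ⟨k - 2, by omega⟩
  have h := part1 (m + 1) (m + 2) (by omega) (by omega) hk
  rw [show m + 1 - 1 = m from rfl, show m + 2 - (m + 1) = 1 from by omega,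
    show m + 2 - 1 = m + 1 from rfl] at h
  rw [h, show m + 2 - 1 = m + 1 from rfl, show m + 2 - 2 = m from rfl]
  have hPP : (∏ i ∈ Finset.Icc 1 m, aSeq a i) * ∏ i ∈ Finset.Icc 1 (m + 1), aSeq a i
      = (∏ i ∈ Finset.Icc 1 m, (aSeq a i) ^ 2) * aSeq a (m + 1) := by
    rw [Finset.prod_Icc_succ_top (by omega : 1 ≤ m + 1), Finset.prod_pow]
    ring
  rw [hPP]

end
end

section
/- Suppose q is odd. Then: (1) b₀ = b; (2) for every 1 ≤ ℓ ≤ t−1, b_ℓ = (1 − a_ℓ·b)·(a − b − a_ℓ)⁻¹; (3) b_{t−1} = (a − b)⁻¹; (4) for every 2 ≤ ℓ ≤ t−2, (b_ℓ·b_{ℓ+1})·(a_ℓ·a_{ℓ−1})⁻¹ = (a_{ℓ+1}·b − 1)·(a_{ℓ−1}·b − 1)⁻¹. -/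
open Polynomial

noncomputable section

lemma alph_map {F K : Type*} [Field F] [Field K] (f : F →+* K) (a : F) (n : ℕ) :
    f (alph a n) = alph (f a) n := by
  induction n using Nat.twoStepInduction with
  | zero => simp [alph]
  | one => simp [alph]
  | more n ih1 ih2 => simp [alph, map_sub, map_mul, ih1, ih2]

lemma alph_closed {K : Type*} [Field K] (μ σ : K) (h1 : μ * σ = 1) (n : ℕ) :
    (μ - σ) * alph (μ + σ) n = μ ^ n - σ ^ n := by
  induction n using Nat.twoStepInduction with
  | zero => simp [alph]
  | one => simp [alph]
  | more n ih1 ih2 =>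
    have e : alph (μ + σ) (n + 2) = (μ + σ) * alph (μ + σ) (n + 1) - alph (μ + σ) n := rfl
    rw [e]
    linear_combination (μ + σ) * ih2 - ih1 + (μ ^ n - σ ^ n) * h1

lemma alph_symm {K : Type*} [Field K] (μ σ : K) (h1 : μ * σ = 1) (hne : μ - σ ≠ 0)
    (t n : ℕ) (h2t : μ ^ (2 * t) = 1) (hn : n ≤ t) :
    alph (μ + σ) (t - n) = -μ ^ t * alph (μ + σ) n := by
  have hσt : σ ^ t = μ ^ t := by
    have h3 : μ ^ t * σ ^ t = 1 := by rw [← mul_pow, h1, one_pow]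
    have h4 : μ ^ t * μ ^ t = 1 := by rw [← pow_add, ← two_mul, h2t]
    calc σ ^ t = μ ^ t * μ ^ t * σ ^ t := by rw [h4, one_mul]
    _ = μ ^ t * (μ ^ t * σ ^ t) := by ring
    _ = μ ^ t := by rw [h3, mul_one]
  have hμtn : μ ^ (t - n) = μ ^ t * σ ^ n := by
    have : μ ^ (t - n) * (μ ^ n * σ ^ n) = μ ^ t * σ ^ n := by
      rw [← mul_assoc, ← pow_add, Nat.sub_add_cancel hn]
    rwa [← mul_pow, h1, one_pow, mul_one] at this
  have hσtn : σ ^ (t - n) = σ ^ t * μ ^ n := by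
    have : σ ^ (t - n) * (σ ^ n * μ ^ n) = σ ^ t * μ ^ n := by
      rw [← mul_assoc, ← pow_add, Nat.sub_add_cancel hn]
    rwa [mul_comm (σ ^ n) (μ ^ n), ← mul_pow, h1, one_pow, mul_one] at this
  have key1 := alph_closed μ σ h1 (t - n)
  have key2 := alph_closed μ σ h1 n
  apply mul_left_cancel₀ hne
  rw [key1, hμtn, hσtn, hσt]
  linear_combination (μ ^ t) * key2

set_option maxHeartbeats 2000000 in
theorem stmt14 (F : Type*) [Field F] [Fintype F] (q : ℕ) (hq : Fintype.card F = q)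
    (a : F) (hirr : Irreducible (X ^ 2 + C a * X + 1 : F[X]))
    (ω : AlgebraicClosure F) (hroot : aeval ω (X ^ 2 + C a * X + 1 : F[X]) = 0)
    (hord : orderOf ω = q + 1)
    (hqodd : Odd q) (t : ℕ) (ht : t = (q + 1) / Nat.gcd 2 (q + 1)) (b : F)
    (hb : ∀ k : ℕ, 1 ≤ k → k ≤ t - 1 → b ≠ aSeq a k) :
    bSeq a b 0 = b ∧
    (∀ l : ℕ, 1 ≤ l → l ≤ t - 1 →
      bSeq a b l = (1 - aSeq a l * b) * (a - b - aSeq a l)⁻¹) ∧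
    bSeq a b (t - 1) = (a - b)⁻¹ ∧
    ∀ l : ℕ, 2 ≤ l → l ≤ t - 2 →
      (bSeq a b l * bSeq a b (l + 1)) * (aSeq a l * aSeq a (l - 1))⁻¹ =
        (aSeq a (l + 1) * b - 1) * (aSeq a (l - 1) * b - 1)⁻¹ := by
  obtain ⟨m0, hm0⟩ := hqodd
  have hq2 : 2 ≤ q := by rw [← hq]; exact Fintype.one_lt_card
  have h2t : q + 1 = 2 * t := by
    have hg : Nat.gcd 2 (q + 1) = 2 := Nat.gcd_eq_left ⟨m0 + 1, by omega⟩
    rw [ht, hg]; omega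
  have ht2 : 2 ≤ t := by omega
  set φ := algebraMap F (AlgebraicClosure F) with hφ
  have φinj : Function.Injective φ := φ.injective
  have hωeq : ω ^ 2 + φ a * ω + 1 = 0 := by simpa using hroot
  have hω0 : ω ≠ 0 := by intro h; rw [h] at hωeq; simp at hωeq
  set μ : AlgebraicClosure F := -ω with hμdef
  set σ : AlgebraicClosure F := -ω⁻¹ with hσdef
  have hms : μ * σ = 1 := by
    rw [hμdef, hσdef]; field_simp
  have hsum : μ + σ = φ a := by
    rw [hμdef, hσdef]
    have hinv : ω * ω⁻¹ = 1 := mul_inv_cancel₀ hω0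
    field_simp
    linear_combination -hωeq
  have hμ0 : μ ≠ 0 := by rw [hμdef]; exact neg_ne_zero.2 hω0
  have hordiff : ∀ n : ℕ, ω ^ n = 1 ↔ (q + 1) ∣ n := by
    intro n; rw [← hord, orderOf_dvd_iff_pow_eq_one]
  have hμω : ∀ n : ℕ, μ ^ (2 * n) = ω ^ (2 * n) := by
    intro n; rw [hμdef]; exact Even.neg_pow ⟨n, by ring⟩ ω
  have hμ2t : μ ^ (2 * t) = 1 := by
    rw [hμω, hordiff, h2t]
  have hμσne : μ - σ ≠ 0 := by
    intro h
    rw [sub_eq_zero] at h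
    have h2 : μ ^ 2 = 1 := by rw [sq]; nth_rewrite 2 [h]; exact hms
    have hω2 : ω ^ 2 = 1 := by
      have h21 := hμω 1
      norm_num at h21
      rw [← h21, h2]
    have := (hordiff 2).1 hω2
    have := Nat.le_of_dvd (by norm_num) this
    omega
  have halph0 : ∀ n : ℕ, alph a n = 0 ↔ t ∣ n := by
    intro n
    have hmap : φ (alph a n) = alph (μ + σ) n := by
      rw [alph_map φ a n, hsum]
    have key := alph_closed μ σ hms n
    constructor
    · intro h0
      have hz : μ ^ n - σ ^ n = 0 := by
        rw [← key, ← hmap, h0, map_zero, mul_zero]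
      have hs : μ ^ n = σ ^ n := by rwa [sub_eq_zero] at hz
      have hμ2n : μ ^ (2 * n) = 1 := by
        calc μ ^ (2 * n) = μ ^ n * μ ^ n := by rw [two_mul, pow_add]
        _ = μ ^ n * σ ^ n := by rw [hs]
        _ = 1 := by rw [← mul_pow, hms, one_pow]
      have hω2n : ω ^ (2 * n) = 1 := by rw [← hμω]; exact hμ2n
      have hdvd := (hordiff (2 * n)).1 hω2n
      rw [h2t] at hdvd
      exact (Nat.mul_dvd_mul_iff_left (by norm_num : 0 < 2)).1 hdvd
    · rintro ⟨c, rfl⟩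
      have h1 : μ ^ (t * c) * μ ^ (t * c) = 1 := by
        rw [← pow_add, show t * c + t * c = (2 * t) * c by ring, pow_mul, hμ2t, one_pow]
      have h2 : μ ^ (t * c) * σ ^ (t * c) = 1 := by rw [← mul_pow, hms, one_pow]
      have hs : μ ^ (t * c) = σ ^ (t * c) :=
        mul_left_cancel₀ (pow_ne_zero _ hμ0) (h1.trans h2.symm)
      have : alph (μ + σ) (t * c) = 0 := by
        have hz : (μ - σ) * alph (μ + σ) (t * c) = 0 := by
          rw [key, hs, sub_self]
        exact (mul_eq_zero.1 hz).resolve_left hμσne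
      apply φinj
      rw [hmap, this, map_zero]
  have halphne : ∀ n : ℕ, 1 ≤ n → n ≤ t - 1 → alph a n ≠ 0 := by
    intro n h1 h2 h0
    have hd := (halph0 n).1 h0
    have := Nat.le_of_dvd (by omega) hd
    omega
  have halphT : alph a t = 0 := (halph0 t).2 dvd_rfl
  have hcross : ∀ n m : ℕ, n ≤ t → m ≤ t →
      alph a (t - n) * alph a m = alph a (t - m) * alph a n := by
    intro n m hn hm
    apply φinj
    rw [map_mul, map_mul, alph_map φ, alph_map φ, alph_map φ, alph_map φ, ← hsum,
      alph_symm μ σ hms hμσne t n hμ2t hn, alph_symm μ σ hms hμσne t m hμ2t hm]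
    ring
  -- aSeq formula
  have haS : ∀ k : ℕ, 1 ≤ k → k ≤ t - 1 → aSeq a k = alph a (k + 1) / alph a k := by
    intro k hk
    induction k, hk using Nat.le_induction with
    | base => intro _; simp [aSeq, alph]
    | succ k hk ih =>
      intro hk1
      have ihk := ih (by omega)
      have hA1 : alph a (k + 1) ≠ 0 := halphne _ (by omega) (by omega)
      rw [show aSeq a (k + 1) = a - (aSeq a k)⁻¹ from rfl, ihk, inv_div,
        show alph a (k + 1 + 1) = a * alph a (k + 1) - alph a k from rfl]
      field_simp
  have haSt : aSeq a (t - 1) = 0 := by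
    rw [haS (t - 1) (by omega) le_rfl, show t - 1 + 1 = t by omega, halphT, zero_div]
  -- bet nonvanishing
  have hbetne : ∀ l : ℕ, l ≤ t - 1 → bet a b l ≠ 0 := by
    intro l hl
    cases l with
    | zero => simp [bet]
    | succ m =>
      intro h0
      rw [show bet a b (m + 1) = b * alph a (m + 1) - alph a m from rfl] at h0
      have hA1 : alph a (m + 1) ≠ 0 := halphne _ (by omega) (by omega)
      have hAt : alph a (t - (m + 1)) ≠ 0 := halphne _ (by omega) (by omega)
      apply hb (t - (m + 1)) (by omega) (by omega)
      rw [haS (t - (m + 1)) (by omega) (by omega),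
        show t - (m + 1) + 1 = t - m by omega]
      have hc := hcross m (m + 1) (by omega) (by omega)
      have hbval : b = alph a m / alph a (m + 1) := by
        field_simp
        linear_combination h0
      rw [hbval, div_eq_div_iff hA1 hAt]
      linear_combination -hc
  -- bSeq formula
  have hbS : ∀ l : ℕ, l ≤ t - 1 → bSeq a b l = bet a b (l + 1) / bet a b l := by
    intro l
    induction l with
    | zero => intro _; simp [bSeq, bet, alph]
    | succ l ih =>
      intro hl
      have ihl := ih (by omega)
      have hB1 : bet a b (l + 1) ≠ 0 := hbetne _ hl
      have hrec : bet a b (l + 2) = a * bet a b (l + 1) - bet a b l := by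
        cases l with
        | zero => simp [bet, alph]; ring
        | succ n =>
          simp only [bet, alph]
          ring
      rw [show bSeq a b (l + 1) = a - (bSeq a b l)⁻¹ from rfl, ihl, inv_div,
        show l + 1 + 1 = l + 2 from rfl, hrec]
      field_simp
  -- part 2
  have P2 : ∀ l : ℕ, 1 ≤ l → l ≤ t - 1 →
      bSeq a b l = (1 - aSeq a l * b) * (a - b - aSeq a l)⁻¹ := by
    intro l h1 h2
    obtain ⟨m, rfl⟩ : ∃ m, l = m + 1 := ⟨l - 1, by omega⟩
    have hA1 : alph a (m + 1) ≠ 0 := halphne _ (by omega) (by omega)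
    have hB1 : bet a b (m + 1) ≠ 0 := hbetne _ (by omega)
    rw [hbS (m + 1) (by omega), haS (m + 1) (by omega) (by omega),
      show bet a b (m + 1 + 1) = b * alph a (m + 1 + 1) - alph a (m + 1) from rfl,
      show bet a b (m + 1) = b * alph a (m + 1) - alph a m from rfl,
      show alph a (m + 1 + 1) = a * alph a (m + 1) - alph a m from rfl]
    rw [show bet a b (m + 1) = b * alph a (m + 1) - alph a m from rfl] at hB1
    have hden : alph a m - b * alph a (m + 1) ≠ 0 := fun h => hB1 (by linear_combination -h)
    have hxeq : a - b - (a * alph a (m + 1) - alph a m) / alph a (m + 1)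
        = (alph a m - b * alph a (m + 1)) / alph a (m + 1) := by
      field_simp
      ring
    rw [hxeq, inv_div]
    have h1 : (1 : F) - (a * alph a (m + 1) - alph a m) / alph a (m + 1) * b
        = (alph a (m + 1) - (a * alph a (m + 1) - alph a m) * b) / alph a (m + 1) := by
      field_simp
    rw [h1, div_mul_div_comm, div_eq_div_iff hB1 (mul_ne_zero hA1 hden)]
    ring
  -- part 4
  have P4 : ∀ l : ℕ, 2 ≤ l → l ≤ t - 2 →
      (bSeq a b l * bSeq a b (l + 1)) * (aSeq a l * aSeq a (l - 1))⁻¹ =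
        (aSeq a (l + 1) * b - 1) * (aSeq a (l - 1) * b - 1)⁻¹ := by
    intro l h2l h2
    obtain ⟨m, rfl⟩ : ∃ m, l = m + 2 := ⟨l - 2, by omega⟩
    have hA1 : alph a (m + 1) ≠ 0 := halphne _ (by omega) (by omega)
    have hA2 : alph a (m + 2) ≠ 0 := halphne _ (by omega) (by omega)
    have hA3 : alph a (m + 3) ≠ 0 := halphne _ (by omega) (by omega)
    have hB2 : bet a b (m + 2) ≠ 0 := hbetne _ (by omega)
    have hB3 : bet a b (m + 3) ≠ 0 := hbetne _ (by omega)
    rw [show m + 2 - 1 = m + 1 by omega,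
      hbS (m + 2) (by omega), hbS (m + 2 + 1) (by omega),
      haS (m + 1) (by omega) (by omega), haS (m + 2) (by omega) (by omega),
      haS (m + 2 + 1) (by omega) (by omega)]
    simp only [show m + 1 + 1 = m + 2 from rfl, show m + 2 + 1 = m + 3 from rfl,
      show m + 3 + 1 = m + 4 from rfl]
    have e1 : alph a (m + 3) / alph a (m + 2) * (alph a (m + 2) / alph a (m + 1))
        = alph a (m + 3) / alph a (m + 1) := by
      field_simp
    have e2 : alph a (m + 2) / alph a (m + 1) * b - 1
        = bet a b (m + 2) / alph a (m + 1) := by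
      rw [show bet a b (m + 2) = b * alph a (m + 2) - alph a (m + 1) from rfl]
      field_simp
    have e3 : alph a (m + 4) / alph a (m + 3) * b - 1
        = bet a b (m + 4) / alph a (m + 3) := by
      rw [show bet a b (m + 4) = b * alph a (m + 4) - alph a (m + 3) from rfl]
      field_simp
    rw [e1, e2, e3, inv_div, inv_div]
    field_simp
  refine ⟨rfl, P2, ?_, P4⟩
  rw [P2 (t - 1) (by omega) le_rfl, haSt]
  simp


end
end
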